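/- arXiv:2112.05382 — 6 statements merged into one kernel-verified Lean document; each statement's English description precedes it below -/
import Mathlib

section
/- If a trigonometric polynomial T of degree n (i.e., T(x) = a_0 + Σ_{k=1}^n (a_k cos(kx) + b_k sin(kx)) with real coefficients) attains its maximal absolute value on the circle at x = 0, then T has no zero in the open interval (-π/(2n), π/(2n)). -/
open Real Finset Polynomial

private lemma key_term (nn k : ℕ) (hk : k ≤ nn) (Ak Bk x : ℝ) :
    ((Ak : ℂ) - Bk * Complex.I)/2 * (Complex.exp (x*Complex.I))^(nn+k)
      + ((Ak : ℂ) + Bk * Complex.I)/2 * (Complex.exp (x*Complex.I))^(nn-k)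
    = (Complex.exp (x*Complex.I))^nn * ((Ak * Real.cos (k*x) + Bk * Real.sin (k*x) : ℝ) : ℂ) := by
  have hcast : ((k*x : ℝ) : ℂ) = (k : ℂ) * x := by push_cast; ring
  set u := Complex.exp (x*Complex.I) with hu
  set c : ℂ := Complex.cos ((k:ℂ) * x) with hc
  set s : ℂ := Complex.sin ((k:ℂ) * x) with hs
  have h1 : s^2 + c^2 = 1 := Complex.sin_sq_add_cos_sq _
  have huk : u^k = c + s * Complex.I := by
    rw [hu, ← Complex.exp_nat_mul]
    have h2 : (k : ℂ) * (x * Complex.I) = ((k:ℂ) * x) * Complex.I := by ring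
    rw [h2, Complex.exp_mul_I]
  have hR : ((Ak * Real.cos (k*x) + Bk * Real.sin (k*x) : ℝ) : ℂ) = Ak * c + Bk * s := by
    rw [hc, hs]
    push_cast
    ring
  have hv : (c + s * Complex.I) * (c - s * Complex.I) = 1 := by
    have hI : Complex.I^2 = -1 := Complex.I_sq
    linear_combination h1 - s^2 * hI
  have hnk : u^(nn-k) = u^nn * (c - s*Complex.I) := by
    have h2 : u^(nn-k) * u^k = u^nn := by rw [← pow_add, Nat.sub_add_cancel hk]
    calc u^(nn-k) = u^(nn-k) * ((c + s*Complex.I) * (c - s*Complex.I)) := by rw [hv, mul_one]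
    _ = (u^(nn-k) * u^k) * (c - s*Complex.I) := by rw [huk]; ring
    _ = u^nn * (c - s*Complex.I) := by rw [h2]
  rw [pow_add, huk, hnk, hR]
  have hI : Complex.I^2 = -1 := Complex.I_sq
  linear_combination (- u^nn * (Bk:ℂ) * s) * hI

private lemma trig_to_poly (n : ℕ) (A B : ℕ → ℝ) :
    ∃ P : Polynomial ℂ, P.natDegree ≤ 2*n ∧
      ∀ x : ℝ, P.eval (Complex.exp (x * Complex.I))
        = (Complex.exp (x * Complex.I))^n *
          ((A 0 + ∑ k ∈ Finset.Icc 1 n, (A k * Real.cos (k*x) + B k * Real.sin (k*x)) : ℝ) : ℂ) := by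
  refine ⟨Polynomial.C ((A 0 : ℝ) : ℂ) * X^n
    + ∑ k ∈ Finset.Icc 1 n, (Polynomial.C (((A k : ℂ) - B k * Complex.I)/2) * X^(n+k)
        + Polynomial.C (((A k : ℂ) + B k * Complex.I)/2) * X^(n-k)), ?_, ?_⟩
  · apply le_trans (Polynomial.natDegree_add_le _ _)
    apply max_le
    · apply le_trans (Polynomial.natDegree_C_mul_le _ _)
      simp [Polynomial.natDegree_X_pow]; omega
    · apply Polynomial.natDegree_sum_le_of_forall_le
      intro k hk
      have hk2 : k ≤ n := (Finset.mem_Icc.1 hk).2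
      apply le_trans (Polynomial.natDegree_add_le _ _)
      apply max_le
      · apply le_trans (Polynomial.natDegree_C_mul_le _ _)
        simp [Polynomial.natDegree_X_pow]; omega
      · apply le_trans (Polynomial.natDegree_C_mul_le _ _)
        simp [Polynomial.natDegree_X_pow]; omega
  · intro x
    rw [Polynomial.eval_add, Polynomial.eval_mul, Polynomial.eval_C, Polynomial.eval_pow,
      Polynomial.eval_X, Polynomial.eval_finset_sum]
    have hsum : ∀ k ∈ Finset.Icc 1 n,
        Polynomial.eval (Complex.exp (x * Complex.I))
          (Polynomial.C (((A k : ℂ) - B k * Complex.I)/2) * X^(n+k)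
            + Polynomial.C (((A k : ℂ) + B k * Complex.I)/2) * X^(n-k))
        = (Complex.exp (x*Complex.I))^n * ((A k * Real.cos (k*x) + B k * Real.sin (k*x) : ℝ) : ℂ) := by
      intro k hk
      rw [Polynomial.eval_add, Polynomial.eval_mul, Polynomial.eval_C, Polynomial.eval_pow,
        Polynomial.eval_X, Polynomial.eval_mul, Polynomial.eval_C, Polynomial.eval_pow,
        Polynomial.eval_X]
      exact key_term n k (Finset.mem_Icc.1 hk).2 (A k) (B k) x
    rw [Finset.sum_congr rfl hsum, ← Finset.mul_sum]
    push_cast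
    ring



private lemma double_root (P : Polynomial ℂ) (W : ℝ → ℝ) (n : ℕ)
    (hPW : ∀ x : ℝ, P.eval (Complex.exp (x * Complex.I))
      = (Complex.exp (x * Complex.I))^n * ((W x : ℝ) : ℂ))
    (x0 : ℝ) (hW0 : W x0 = 0) (hW' : HasDerivAt W 0 x0) :
    P.IsRoot (Complex.exp (x0 * Complex.I))
      ∧ P.derivative.IsRoot (Complex.exp (x0 * Complex.I)) := by
  have hroot : P.eval (Complex.exp (x0 * Complex.I)) = 0 := by
    rw [hPW x0, hW0]; simp
  refine ⟨hroot, ?_⟩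
  set u := Complex.exp (x0 * Complex.I) with hu
  have hu0 : u ≠ 0 := Complex.exp_ne_zero _
  have hexpC : HasDerivAt (fun z : ℂ => Complex.exp (z * Complex.I))
      (Complex.exp ((x0:ℂ) * Complex.I) * Complex.I) (x0:ℂ) := by
    simpa using ((hasDerivAt_id ((x0:ℝ):ℂ)).mul_const Complex.I).cexp
  have hL : HasDerivAt (fun y : ℝ => P.eval (Complex.exp ((y:ℂ) * Complex.I)))
      (P.derivative.eval u * (u * Complex.I)) x0 := by
    have h2 : HasDerivAt (fun z : ℂ => P.eval z) (P.derivative.eval u) u := P.hasDerivAt u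
    exact (HasDerivAt.comp (h := fun z : ℂ => Complex.exp (z * Complex.I)) _ h2 hexpC).comp_ofReal
  have hexpn : HasDerivAt (fun y : ℝ => (Complex.exp ((y:ℂ) * Complex.I))^n)
      ((n : ℂ) * u^(n-1) * (u * Complex.I)) x0 := by
    have h5 : HasDerivAt (fun z : ℂ => (Complex.exp (z * Complex.I))^n)
        ((n : ℂ) * u^(n-1) * (u * Complex.I)) (x0:ℂ) := by
      simpa [hu] using hexpC.fun_pow n
    exact h5.comp_ofReal
  have hWc : HasDerivAt (fun y : ℝ => ((W y : ℝ) : ℂ)) (((0:ℝ) : ℂ)) x0 := hW'.ofReal_comp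
  have hR : HasDerivAt (fun y : ℝ => (Complex.exp ((y:ℂ) * Complex.I))^n * ((W y : ℝ) : ℂ))
      ((n : ℂ) * u^(n-1) * (u * Complex.I) * ((W x0 : ℝ) : ℂ) + (Complex.exp ((x0:ℂ) * Complex.I))^n * ((0:ℝ):ℂ)) x0 :=
    hexpn.mul hWc
  have heq : (fun y : ℝ => P.eval (Complex.exp ((y:ℂ) * Complex.I)))
      = (fun y : ℝ => (Complex.exp ((y:ℂ) * Complex.I))^n * ((W y : ℝ) : ℂ)) := funext hPW
  rw [heq] at hL
  have huniq := hL.unique hR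
  rw [hW0] at huniq
  simp only [Complex.ofReal_zero, mul_zero, add_zero] at huniq
  rcases mul_eq_zero.1 huniq with h | h
  · exact h
  · exact absurd h (mul_ne_zero hu0 Complex.I_ne_zero)


private lemma exp_inj_circle {y1 y2 : ℝ} (h1 : 0 ≤ y1) (h2 : y1 < 2*π) (h3 : 0 ≤ y2)
    (h4 : y2 < 2*π) (he : Complex.exp (y1 * Complex.I) = Complex.exp (y2 * Complex.I)) :
    y1 = y2 := by
  rw [Complex.exp_eq_exp_iff_exists_int] at he
  obtain ⟨m, hm⟩ := he
  have him : ((y1 : ℂ) * Complex.I).im = ((y2 : ℂ) * Complex.I + m * (2 * π * Complex.I)).im := by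
    rw [hm]
  simp [Complex.add_im, Complex.mul_im] at him
  -- him : y1 = y2 + m * (2*π)  (roughly)
  have hpi := Real.pi_pos
  have hm0 : m = 0 := by
    rcases lt_trichotomy m 0 with h | h | h
    · have : (m : ℝ) ≤ -1 := by exact_mod_cast (show m ≤ -1 by omega)
      nlinarith
    · exact h
    · have : (1:ℝ) ≤ (m:ℝ) := by exact_mod_cast h
      nlinarith
  rw [hm0] at him
  simpa using him
private lemma cos_lt_one' {y : ℝ} (h1 : 0 < y) (h2 : y < 2*π) : Real.cos y < 1 := by
  rcases lt_or_eq_of_le (Real.cos_le_one y) with h | h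
  · exact h
  · exfalso
    have := (Real.cos_eq_one_iff_of_lt_of_lt (by linarith [Real.pi_pos]) h2).1 h
    linarith


private lemma cos_nat_pi_even {j : ℕ} (h : Even j) : Real.cos (j * π) = 1 := by
  obtain ⟨m, hm⟩ := h
  have : (j : ℝ) * π = m * (2 * π) := by rw [hm]; push_cast; ring
  rw [this, Real.cos_nat_mul_two_pi]

private lemma cos_nat_pi_odd {j : ℕ} (h : Odd j) : Real.cos (j * π) = -1 := by
  obtain ⟨m, hm⟩ := h
  have : (j : ℝ) * π = m * (2 * π) + π := by rw [hm]; push_cast; ring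
  rw [this, Real.cos_add_pi, Real.cos_nat_mul_two_pi]

set_option maxHeartbeats 2000000 in
private lemma main_lemma (n : ℕ) (hn : 1 ≤ n) (a b : ℕ → ℝ) (T : ℝ → ℝ)
    (hT : ∀ x, T x = a 0 + ∑ k ∈ Finset.Icc 1 n, (a k * Real.cos (k*x) + b k * Real.sin (k*x)))
    (hb : ∀ x, |T x| ≤ T 0)
    (hpos : 0 < T 0)
    (x₀ : ℝ) (h0 : 0 < x₀) (h1 : x₀ < π/(2*n)) (hz : T x₀ = 0) : False := by
  have hπ := Real.pi_pos
  have hn' : (0:ℝ) < n := by exact_mod_cast Nat.pos_of_ne_zero (by omega)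
  set M := T 0 with hMdef
  have hM : 0 < M := hpos
  have hnx₀ : (n:ℝ) * x₀ < π / 2 := by
    have : (n:ℝ) * x₀ < n * (π/(2*n)) := by
      exact mul_lt_mul_of_pos_left h1 hn'
    calc (n:ℝ) * x₀ < n * (π/(2*n)) := this
      _ = π/2 := by field_simp
  have hc0 : 0 < Real.cos ((n:ℝ) * x₀) := by
    apply Real.cos_pos_of_mem_Ioo
    constructor
    · nlinarith
    · exact hnx₀
  -- grid points
  set xj : ℕ → ℝ := fun j => j * π / n with hxjdef
  have hxval : ∀ j : ℕ, (n:ℝ) * xj j = j * π := by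
    intro j; rw [hxjdef]; field_simp
  have hxj_pos : ∀ j : ℕ, 0 < j → 0 < xj j := by
    intro j hj
    have : (0:ℝ) < j := by exact_mod_cast hj
    rw [hxjdef]; positivity
  have hxj_lt : ∀ j : ℕ, j ≤ 2*n - 1 → xj j < 2*π := by
    intro j hj
    have hj' : (j:ℝ) ≤ 2*n - 1 := by
      have : (j:ℕ) ≤ 2*n - 1 := hj
      have h2 : ((2*n - 1 : ℕ) : ℝ) = 2*(n:ℝ) - 1 := by
        push_cast [Nat.cast_sub (by omega : 1 ≤ 2*n)]; ring
      calc (j:ℝ) ≤ ((2*n-1:ℕ):ℝ) := by exact_mod_cast this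
        _ = 2*n - 1 := h2
    rw [hxjdef]
    rw [div_lt_iff₀ hn']
    nlinarith
  -- lower endpoints
  set L : ℕ → ℝ := fun j => if j = 0 then x₀ else xj j with hLdef
  have hxj_mono : ∀ i j : ℕ, i ≤ j → xj i ≤ xj j := by
    intro i j hij
    have hc : (i:ℝ) ≤ j := by exact_mod_cast hij
    show (i:ℝ) * π / n ≤ (j:ℝ) * π / n
    gcongr
  have hx01 : x₀ < xj 1 := by
    have h2 : π/(2*(n:ℝ)) < π/(n:ℝ) := by
      have hlt : (n:ℝ) < 2*n := by nlinarith
      exact div_lt_div_of_pos_left hπ hn' hlt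
    have h3 : xj 1 = π/(n:ℝ) := by show ((1:ℕ):ℝ) * π / n = π/(n:ℝ); push_cast; ring
    linarith
  have hLpos : ∀ j : ℕ, 0 < L j := by
    intro j
    rw [hLdef]
    by_cases hj : j = 0
    · simp [hj, h0]
    · simp only [if_neg hj]
      exact hxj_pos j (Nat.pos_of_ne_zero hj)
  have hLU : ∀ j : ℕ, L j < xj (j+1) := by
    intro j
    rw [hLdef]
    by_cases hj : j = 0
    · simp only [hj, if_pos rfl]
      simpa [hj] using hx01
    · simp only [if_neg hj]
      show (j:ℝ) * π / n < ((j+1:ℕ):ℝ) * π / n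
      have hc : (j:ℝ) < ((j+1:ℕ):ℝ) := by push_cast; linarith
      gcongr
  set ε := M * Real.cos ((n:ℝ)*x₀) / 8 with hεdef
  have hεpos : 0 < ε := by positivity
  set V : ℝ → ℝ := fun x => Real.cos ((n:ℝ)*x) - 1 + (1 - Real.cos x)/2 with hVdef
  set W : ℝ → ℝ := fun x => M * Real.cos ((n:ℝ)*x) - T x + ε * V x with hWdef
  have hbT : ∀ x, -M ≤ T x ∧ T x ≤ M := fun x => abs_le.1 (hb x)
  -- trig form of W
  set A : ℕ → ℝ := fun k => if k = 0 then (-(a 0) - ε/2)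
    else ((if k = n then M + ε else 0) + (if k = 1 then -(ε/2) else 0) - a k) with hAdef
  set B : ℕ → ℝ := fun k => -(b k) with hBdef
  clear_value M ε V W A B
  have hWform : ∀ x, W x = A 0 + ∑ k ∈ Finset.Icc 1 n,
      (A k * Real.cos (k*x) + B k * Real.sin (k*x)) := by
    intro x
    have e1 : ∑ k ∈ Finset.Icc 1 n, (A k * Real.cos (k*x) + B k * Real.sin (k*x))
        = ∑ k ∈ Finset.Icc 1 n, ((if k = n then (M+ε) * Real.cos ((k:ℝ)*x) else 0)
            + ((if k = 1 then -(ε/2) * Real.cos ((k:ℝ)*x) else 0)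
            + (-(a k * Real.cos ((k:ℝ)*x)) - b k * Real.sin ((k:ℝ)*x)))) := by
      apply Finset.sum_congr rfl
      intro k hk
      have hk0 : k ≠ 0 := by have := (Finset.mem_Icc.1 hk).1; omega
      simp only [hAdef, hBdef, if_neg hk0]
      split_ifs <;> ring
    rw [e1, Finset.sum_add_distrib, Finset.sum_add_distrib]
    rw [Finset.sum_ite_eq' (Finset.Icc 1 n) n (fun k => (M+ε) * Real.cos ((k:ℝ)*x))]
    rw [Finset.sum_ite_eq' (Finset.Icc 1 n) 1 (fun k => -(ε/2) * Real.cos ((k:ℝ)*x))]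
    have hnmem : n ∈ Finset.Icc 1 n := Finset.mem_Icc.2 ⟨hn, le_refl n⟩
    have h1mem : (1:ℕ) ∈ Finset.Icc 1 n := Finset.mem_Icc.2 ⟨le_refl 1, hn⟩
    rw [if_pos hnmem, if_pos h1mem]
    have hsum_neg : ∑ k ∈ Finset.Icc 1 n, (-(a k * Real.cos ((k:ℝ)*x)) - b k * Real.sin ((k:ℝ)*x))
        = -(∑ k ∈ Finset.Icc 1 n, (a k * Real.cos ((k:ℝ)*x) + b k * Real.sin ((k:ℝ)*x))) := by
      rw [← Finset.sum_neg_distrib]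
      apply Finset.sum_congr rfl
      intro k _
      ring
    rw [hsum_neg]
    simp only [hWdef, hVdef, hAdef, hBdef]
    rw [hT x]
    norm_num
    push_cast
    ring
  obtain ⟨P, hdeg, hPW0⟩ := trig_to_poly n A B
  have hPW : ∀ x : ℝ, P.eval (Complex.exp (x * Complex.I))
      = (Complex.exp (x * Complex.I))^n * ((W x : ℝ) : ℂ) := by
    intro x
    rw [hPW0 x, ← hWform x]
  -- continuity
  have hTeq : T = fun x => a 0 + ∑ k ∈ Finset.Icc 1 n,
      (a k * Real.cos (k*x) + b k * Real.sin (k*x)) := funext hT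
  have hTc : Continuous T := by rw [hTeq]; fun_prop
  have hWc : Continuous W := by rw [hWdef, hVdef]; fun_prop
  -- derivative of T at 0 is 0
  have hTd : HasDerivAt T (∑ k ∈ Finset.Icc 1 n,
      (a k * (-Real.sin ((k:ℝ)*0) * k) + b k * (Real.cos ((k:ℝ)*0) * k))) 0 := by
    rw [hTeq]
    apply HasDerivAt.const_add
    apply HasDerivAt.fun_sum
    intro k _
    have hlin : HasDerivAt (fun x : ℝ => (k:ℝ) * x) ((k:ℝ)) 0 := by
      simpa using (hasDerivAt_id (0:ℝ)).const_mul (k:ℝ)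
    have hck : HasDerivAt (fun x : ℝ => Real.cos ((k:ℝ)*x)) (-Real.sin ((k:ℝ)*0) * k) 0 := by
      exact (Real.hasDerivAt_cos ((k:ℝ)*0)).comp 0 hlin
    have hsk : HasDerivAt (fun x : ℝ => Real.sin ((k:ℝ)*x)) (Real.cos ((k:ℝ)*0) * k) 0 := by
      exact (Real.hasDerivAt_sin ((k:ℝ)*0)).comp 0 hlin
    exact (hck.const_mul (a k)).add (hsk.const_mul (b k))
  have hmaxT : IsLocalMax T 0 :=
    Filter.Eventually.of_forall (fun x => le_trans (le_abs_self _) ((hb x).trans_eq hMdef))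
  have hTd0 : HasDerivAt T 0 0 := by
    have := hmaxT.hasDerivAt_eq_zero hTd
    rwa [this] at hTd
  -- derivative of W at 0 is 0
  have hlinn : HasDerivAt (fun x : ℝ => (n:ℝ) * x) ((n:ℝ)) 0 := by
    simpa using (hasDerivAt_id (0:ℝ)).const_mul (n:ℝ)
  have hcn : HasDerivAt (fun x : ℝ => Real.cos ((n:ℝ)*x)) (-Real.sin ((n:ℝ)*0) * n) 0 := by
    exact (Real.hasDerivAt_cos ((n:ℝ)*0)).comp 0 hlinn
  have hVd : HasDerivAt V (-Real.sin ((n:ℝ)*0) * n + (0 - -Real.sin 0)/2) 0 := by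
    rw [hVdef]
    exact ((hcn.sub_const 1).add (((hasDerivAt_const (0:ℝ) (1:ℝ)).sub (Real.hasDerivAt_cos 0)).div_const 2))
  have hWd : HasDerivAt W 0 0 := by
    have h := ((hcn.const_mul M).fun_sub hTd0).fun_add (hVd.const_mul ε)
    rw [hWdef]
    convert h using 1
    · rfl
    · rfl
    · simp
  have hW00 : W 0 = 0 := by simp [hWdef, hVdef, hMdef]
  -- values of W at grid points
  have hWodd : ∀ j : ℕ, Odd j → W (xj j) < 0 := by
    intro j hj
    have hcj : Real.cos ((n:ℝ) * xj j) = -1 := by rw [hxval j]; exact cos_nat_pi_odd hj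
    have hV' : V (xj j) ≤ -1 := by
      rw [hVdef]; simp only []
      have := Real.neg_one_le_cos (xj j)
      rw [hcj] at *
      nlinarith [Real.neg_one_le_cos (xj j)]
    have hTj := (hbT (xj j)).1
    have : W (xj j) = M * (-1) - T (xj j) + ε * V (xj j) := by rw [hWdef]; simp [hcj]
    nlinarith
  have hWeven : ∀ j : ℕ, Even j → 0 < j → j ≤ 2*n - 1 → 0 < W (xj j) := by
    intro j hj hj0 hj1
    have hcj : Real.cos ((n:ℝ) * xj j) = 1 := by rw [hxval j]; exact cos_nat_pi_even hj
    have hcos_lt : Real.cos (xj j) < 1 := cos_lt_one' (hxj_pos j hj0) (hxj_lt j hj1)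
    have hV' : 0 < V (xj j) := by
      rw [hVdef]; simp only []
      rw [hcj]
      nlinarith
    have hTj := (hbT (xj j)).2
    have : W (xj j) = M * 1 - T (xj j) + ε * V (xj j) := by rw [hWdef]; simp [hcj]
    nlinarith
  have hWx₀ : 0 < W x₀ := by
    have hV' : -2 ≤ V x₀ := by
      rw [hVdef]; simp only []
      linarith [Real.neg_one_le_cos ((n:ℝ)*x₀), Real.cos_le_one x₀]
    have hWx : W x₀ = M * Real.cos ((n:ℝ)*x₀) + ε * V x₀ := by
      simp only [hWdef]; rw [hz]; ring
    have hMc : 0 < M * Real.cos ((n:ℝ)*x₀) := mul_pos hM hc0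
    have hprod : ε * (-2) ≤ ε * V x₀ := mul_le_mul_of_nonneg_left hV' (le_of_lt hεpos)
    rw [hWx]
    rw [hεdef] at hprod ⊢
    linarith
  have hzex : ∀ j : ℕ, ∃ y, (j < 2*n - 1 → (L j < y ∧ y < xj (j+1) ∧ W y = 0)) := by
    intro j
    by_cases hj : j < 2*n-1
    swap
    · exact ⟨0, fun h => absurd h hj⟩
    have hWL : (Even j → 0 < W (L j)) ∧ (Odd j → W (L j) < 0) := by
      constructor
      · intro he
        rw [hLdef]
        by_cases hj0 : j = 0
        · simpa [hj0] using hWx₀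
        · simp only [if_neg hj0]
          exact hWeven j he (Nat.pos_of_ne_zero hj0) (by omega)
      · intro ho
        have hj0 : j ≠ 0 := by rintro rfl; exact (Nat.not_odd_zero) ho
        rw [hLdef]
        simp only [if_neg hj0]
        exact hWodd j ho
    rcases Nat.even_or_odd j with he | ho
    · -- W (L j) > 0, W (xj (j+1)) < 0
      have hWa : 0 < W (L j) := hWL.1 he
      have hWb : W (xj (j+1)) < 0 := hWodd (j+1) (Even.add_one he)
      have hsub := intermediate_value_Ioo' (le_of_lt (hLU j)) hWc.continuousOn
      have h0mem : (0:ℝ) ∈ Set.Ioo (W (xj (j+1))) (W (L j)) := ⟨hWb, hWa⟩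
      obtain ⟨y, hy, hy0⟩ := hsub h0mem
      exact ⟨y, fun _ => ⟨hy.1, hy.2, hy0⟩⟩
    · -- W (L j) < 0, W (xj (j+1)) > 0
      have hWa : W (L j) < 0 := hWL.2 ho
      have hWb : 0 < W (xj (j+1)) := hWeven (j+1) (Odd.add_one ho) (by omega) (by omega)
      have hsub := intermediate_value_Ioo (le_of_lt (hLU j)) hWc.continuousOn
      have h0mem : (0:ℝ) ∈ Set.Ioo (W (L j)) (W (xj (j+1))) := ⟨hWa, hWb⟩
      obtain ⟨y, hy, hy0⟩ := hsub h0mem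
      exact ⟨y, fun _ => ⟨hy.1, hy.2, hy0⟩⟩
  choose z hzp using hzex
  have hzpos : ∀ j : ℕ, j < 2*n-1 → 0 < z j := fun j hj =>
    lt_trans (hLpos j) ((hzp j hj).1)
  have hzlt : ∀ j : ℕ, j < 2*n-1 → z j < 2*π := by
    intro j hj
    have := (hzp j hj).2.1
    have h2 : xj (j+1) < 2*π := hxj_lt (j+1) (by omega)
    linarith
  have hzmono : ∀ i j : ℕ, i < j → j < 2*n-1 → z i < z j := by
    intro i j hij hj
    have hi : i < 2*n-1 := by omega
    have h2 : z i < xj (i+1) := (hzp i hi).2.1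
    have h3 : xj (i+1) ≤ xj j := hxj_mono (i+1) j (by omega)
    have h4 : L j < z j := (hzp j hj).1
    have h5 : L j = xj j := by rw [hLdef]; simp only [if_neg (by omega : j ≠ 0)]
    linarith
  -- roots of P
  have hroot_z : ∀ j : ℕ, j < 2*n-1 → P.eval (Complex.exp (z j * Complex.I)) = 0 := by
    intro j hj
    rw [hPW (z j), (hzp j hj).2.2]
    simp
  obtain ⟨hr1, hr2⟩ := double_root P W n hPW 0 hW00 hWd
  set u0 : ℂ := Complex.exp (((0:ℝ):ℂ) * Complex.I) with hu0def
  have hPne : P ≠ 0 := by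
    intro h
    have h2 := hPW x₀
    rw [h, Polynomial.eval_zero] at h2
    have h3 := h2.symm
    rcases mul_eq_zero.1 h3 with h4 | h4
    · exact pow_ne_zero n (Complex.exp_ne_zero _) h4
    · rw [Complex.ofReal_eq_zero] at h4
      exact absurd h4 (ne_of_gt hWx₀)
  obtain ⟨Q1, hQ1⟩ := Polynomial.dvd_iff_isRoot.2 hr1
  have hQ11 : Q1.IsRoot u0 := by
    have hder : P.derivative = Q1 + (X - Polynomial.C u0) * Q1.derivative := by
      rw [hQ1, Polynomial.derivative_mul, Polynomial.derivative_X_sub_C]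
      ring
    have h2 : Polynomial.eval u0 (Polynomial.derivative P) = 0 := hr2
    rw [hder] at h2
    simp only [Polynomial.eval_add, Polynomial.eval_mul, Polynomial.eval_sub,
      Polynomial.eval_X, Polynomial.eval_C, sub_self, zero_mul, add_zero] at h2
    exact h2
  obtain ⟨Q, hQ⟩ := Polynomial.dvd_iff_isRoot.2 hQ11
  have hPQ : P = (X - Polynomial.C u0)^2 * Q := by rw [hQ1, hQ]; ring
  have hQne : Q ≠ 0 := by
    intro h
    rw [h, mul_zero] at hPQ
    exact hPne hPQ
  have hdegQ : Q.natDegree ≤ 2*n - 2 := by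
    have h2 : P.natDegree = 2 + Q.natDegree := by
      rw [hPQ, Polynomial.natDegree_mul (pow_ne_zero 2 (Polynomial.X_sub_C_ne_zero u0)) hQne,
        Polynomial.natDegree_pow, Polynomial.natDegree_X_sub_C]
    omega
  have hQroot : ∀ j : ℕ, j < 2*n-1 → Q.IsRoot (Complex.exp (z j * Complex.I)) := by
    intro j hj
    have h3 := hroot_z j hj
    rw [hPQ, Polynomial.eval_mul, Polynomial.eval_pow, Polynomial.eval_sub,
      Polynomial.eval_X, Polynomial.eval_C] at h3
    rcases mul_eq_zero.1 h3 with h4 | h4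
    · exfalso
      have h5 : Complex.exp (z j * Complex.I) = u0 := by
        have := pow_eq_zero_iff (n := 2) (by norm_num) |>.1 h4
        rw [sub_eq_zero] at this
        exact this
      rw [hu0def] at h5
      have h6 : z j = 0 := exp_inj_circle (le_of_lt (hzpos j hj)) (hzlt j hj)
        le_rfl (by linarith) h5
      exact absurd h6 (ne_of_gt (hzpos j hj))
    · exact h4
  have hzinj : Set.InjOn (fun j => Complex.exp (z j * Complex.I)) ↑(Finset.range (2*n-1)) := by
    intro i hi j hj hij
    rw [Finset.mem_coe, Finset.mem_range] at hi hj
    simp only [] at hij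
    have hzeq : z i = z j := exp_inj_circle (le_of_lt (hzpos i hi)) (hzlt i hi)
      (le_of_lt (hzpos j hj)) (hzlt j hj) hij
    by_contra hne
    rcases Nat.lt_or_ge i j with h | h
    · exact absurd hzeq (ne_of_lt (hzmono i j h hj))
    · have hji : j < i := by omega
      exact absurd hzeq.symm (ne_of_lt (hzmono j i hji hi))
  set F := (Finset.range (2*n-1)).image (fun j => Complex.exp (z j * Complex.I)) with hFdef
  have hFcard : F.card = 2*n-1 := by
    rw [hFdef, Finset.card_image_of_injOn hzinj, Finset.card_range]
  have hFsub : F ⊆ Q.roots.toFinset := by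
    intro r hr
    rw [hFdef, Finset.mem_image] at hr
    obtain ⟨j, hj, rfl⟩ := hr
    rw [Finset.mem_range] at hj
    rw [Multiset.mem_toFinset, Polynomial.mem_roots hQne]
    exact hQroot j hj
  have hc1 := Finset.card_le_card hFsub
  have hc2 := Multiset.toFinset_card_le Q.roots
  have hc3 := Polynomial.card_roots' Q
  omega

private lemma main2 (n : ℕ) (hn : 1 ≤ n) (a b : ℕ → ℝ) (T : ℝ → ℝ)
    (hT : ∀ x, T x = a 0 + ∑ k ∈ Finset.Icc 1 n, (a k * Real.cos (k*x) + b k * Real.sin (k*x)))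
    (hb : ∀ x, |T x| ≤ T 0)
    (hpos : 0 < T 0)
    (x : ℝ) (hx1 : -(π/(2*n)) < x) (hx2 : x < π/(2*n)) (hxne : x ≠ 0) (hz : T x = 0) :
    False := by
  rcases lt_or_gt_of_ne hxne with h | h
  · apply main_lemma n hn a (fun k => -(b k)) (fun y => T (-y)) ?_ ?_ ?_ (-x)
      (by linarith) (by linarith) (by simpa using hz)
    · intro y
      show T (-y) = a 0 + ∑ k ∈ Finset.Icc 1 n, (a k * Real.cos (k*y) + -(b k) * Real.sin (k*y))
      rw [hT (-y)]
      congr 1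
      apply Finset.sum_congr rfl
      intro k _
      rw [mul_neg, Real.cos_neg, Real.sin_neg]
      ring
    · intro y
      simpa using hb (-y)
    · simpa using hpos
  · exact main_lemma n hn a b T hT hb hpos x h hx2 hz

/-- If a trigonometric polynomial `T` of degree `n`, not identically zero,
attains its maximal absolute value at `x = 0`, then `T` has no zero in `(-π/(2n), π/(2n))`. -/
theorem trig_poly_max_no_zero_near
    (n : ℕ) (hn : 1 ≤ n) (a b : ℕ → ℝ)
    (T : ℝ → ℝ)
    (hT : ∀ x, T x = a 0 + ∑ k ∈ Finset.Icc 1 n, (a k * Real.cos (k * x) + b k * Real.sin (k * x)))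
    (hnz : ∃ x, T x ≠ 0)
    (hmax : ∀ x, |T x| ≤ |T 0|) :
    ∀ x ∈ Set.Ioo (-(π / (2 * n))) (π / (2 * n)), T x ≠ 0 := by
  intro x hx hTx
  obtain ⟨hx1, hx2⟩ := hx
  have hM0 : T 0 ≠ 0 := by
    intro h
    obtain ⟨y, hy⟩ := hnz
    have h2 := hmax y
    rw [h] at h2
    simp only [abs_zero, abs_nonpos_iff] at h2
    exact hy h2
  have hxne : x ≠ 0 := by rintro rfl; exact hM0 hTx
  rcases lt_or_gt_of_ne hM0 with hneg | hpos
  · apply main2 n hn (fun k => -(a k)) (fun k => -(b k)) (fun y => -(T y)) ?_ ?_ ?_ x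
      hx1 hx2 hxne (by simp [hTx])
    · intro y
      show -(T y) = -(a 0) + ∑ k ∈ Finset.Icc 1 n,
        (-(a k) * Real.cos (k*y) + -(b k) * Real.sin (k*y))
      rw [hT y, neg_add]
      congr 1
      rw [← Finset.sum_neg_distrib]
      apply Finset.sum_congr rfl
      intro k _
      ring
    · intro y
      rw [abs_neg]
      exact (hmax y).trans_eq (by rw [abs_of_neg hneg])
    · show (0:ℝ) < -(T 0)
      linarith
  · apply main2 n hn a b T hT ?_ hpos x hx1 hx2 hxne hTx
    intro y
    exact (hmax y).trans_eq (abs_of_pos hpos)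
end

section
/- If a polynomial P ∈ ℝ[x₁,…,x_d] of degree at most n attains its maximal absolute value on the unit sphere S^{d-1} ⊂ ℝ^d at a point p and P is not identically zero on S^{d-1}, then every point q ∈ S^{d-1} with P(q) = 0 satisfies the angular distance bound arccos⟨p,q⟩ ≥ π/(2n). -/
open Polynomial Complex Real

noncomputable section

variable {d : ℕ} (n : ℕ) (a b : Fin d → ℝ) (P : MvPolynomial (Fin d) ℝ)

/-- factor polynomial for coordinate i -/
def Fi (i : Fin d) : Polynomial ℂ :=
  C ((a i : ℂ) * (1/2)) * (X^2 + 1) + C ((b i : ℂ) * (1/(2*I))) * (X^2 - 1)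

lemma Fi_natDegree (i : Fin d) : (Fi a b i).natDegree ≤ 2 := by
  unfold Fi
  compute_degree

lemma Fi_eval (i : Fin d) (θ : ℝ) :
    (Fi a b i).eval (Complex.exp (θ * I)) =
      Complex.exp (θ * I) * ((Real.cos θ * a i + Real.sin θ * b i : ℝ) : ℂ) := by
  have hz : Complex.exp (θ * I) ≠ 0 := Complex.exp_ne_zero _
  have hzinv : Complex.exp (-(θ:ℂ) * I) = (Complex.exp (θ * I))⁻¹ := by
    rw [← Complex.exp_neg]; ring_nf
  have hc : ((Real.cos θ : ℝ) : ℂ) = (Complex.exp (θ*I) + (Complex.exp (θ*I))⁻¹)/2 := by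
    rw [Complex.ofReal_cos, Complex.cos, hzinv]
  have hs : ((Real.sin θ : ℝ) : ℂ) = ((Complex.exp (θ*I))⁻¹ - Complex.exp (θ*I)) * I / 2 := by
    rw [Complex.ofReal_sin, Complex.sin, hzinv]
  simp only [Fi, eval_add, eval_mul, eval_C, eval_pow, eval_X, eval_one, eval_sub]
  push_cast
  rw [Complex.cos, Complex.sin, hzinv]
  have hI : (I:ℂ) ≠ 0 := Complex.I_ne_zero
  field_simp
  linear_combination (((b i):ℂ)*Complex.exp (θ*I)^2 - (b i)) * Complex.I_sq

def Gf : Polynomial ℂ :=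
  ∑ m ∈ P.support, C ((P.coeff m : ℝ) : ℂ) * X ^ (n - m.sum fun _ e => e) *
    ∏ i ∈ m.support, (Fi a b i) ^ (m i)

lemma Gf_natDegree (hdeg : P.totalDegree ≤ n) : (Gf n a b P).natDegree ≤ 2 * n := by
  apply Polynomial.natDegree_sum_le_of_forall_le
  intro m hm
  have hd : (m.sum fun _ e => e) ≤ n := le_trans (MvPolynomial.le_totalDegree hm) hdeg
  have h1 : (C ((P.coeff m : ℝ) : ℂ) * X ^ (n - m.sum fun _ e => e)).natDegree
      ≤ n - m.sum fun _ e => e := Polynomial.natDegree_C_mul_le _ _ |>.trans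
        (Polynomial.natDegree_X_pow _).le
  have h2 : (∏ i ∈ m.support, (Fi a b i) ^ (m i)).natDegree ≤ 2 * m.sum fun _ e => e := by
    refine (Polynomial.natDegree_prod_le _ _).trans ?_
    have : ∀ i ∈ m.support, ((Fi a b i) ^ (m i)).natDegree ≤ 2 * m i := by
      intro i _
      refine (Polynomial.natDegree_pow_le).trans ?_
      have := Fi_natDegree a b i
      nlinarith [Nat.zero_le (m i)]
    refine (Finset.sum_le_sum this).trans ?_
    rw [← Finset.mul_sum]
    rfl
  refine (Polynomial.natDegree_mul_le).trans ?_
  omega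

lemma Gf_eval (hdeg : P.totalDegree ≤ n) (θ : ℝ) :
    (Gf n a b P).eval (Complex.exp (θ*I)) = Complex.exp (n*θ*I) *
      ((MvPolynomial.eval (fun i => Real.cos θ * a i + Real.sin θ * b i) P : ℝ) : ℂ) := by
  rw [Gf, Polynomial.eval_finset_sum, MvPolynomial.eval_eq]
  push_cast
  rw [Finset.mul_sum]
  apply Finset.sum_congr rfl
  intro m hm
  have hd : (m.sum fun _ e => e) ≤ n := le_trans (MvPolynomial.le_totalDegree hm) hdeg
  simp only [eval_mul, eval_C, eval_pow, eval_X, Polynomial.eval_prod]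
  have hfac : ∀ i ∈ m.support, ((Fi a b i).eval (Complex.exp (θ*I)))^(m i)
      = (Complex.exp (θ*I))^(m i) * ((Real.cos θ * a i + Real.sin θ * b i : ℝ) : ℂ)^(m i) := by
    intro i _
    rw [Fi_eval, mul_pow]
  rw [Finset.prod_congr rfl hfac, Finset.prod_mul_distrib, Finset.prod_pow_eq_pow_sum]
  have hsum : ∑ i ∈ m.support, m i = m.sum fun _ e => e := rfl
  have hexp : Complex.exp ((n:ℂ)*θ*I) = (Complex.exp (θ*I))^n := by
    rw [← Complex.exp_nat_mul]; ring_nf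
  rw [hsum, hexp]
  have : (Complex.exp (θ*I))^(n - m.sum fun _ e => e) * (Complex.exp (θ*I))^(m.sum fun _ e => e)
      = (Complex.exp (θ*I))^n := by
    rw [← pow_add, Nat.sub_add_cancel hd]
  push_cast
  ring_nf
  ring_nf at this
  linear_combination (∏ x ∈ m.support, (Complex.cos θ * ((a x : ℝ):ℂ) + Complex.sin θ * ((b x : ℝ):ℂ)) ^ m x) * (((MvPolynomial.coeff m P : ℝ):ℂ)) * this


lemma sum_count_le {α : Type*} [DecidableEq α] (T : Finset α) (M : Multiset α) :
    ∑ w ∈ T, M.count w ≤ Multiset.card M := by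
  classical
  calc ∑ w ∈ T, M.count w = ∑ w ∈ T ∩ M.toFinset, M.count w := by
        refine (Finset.sum_subset Finset.inter_subset_left ?_).symm
        intro x hx hnx
        rw [Multiset.count_eq_zero]
        intro hmem
        exact hnx (Finset.mem_inter.mpr ⟨hx, Multiset.mem_toFinset.mpr hmem⟩)
    _ ≤ ∑ w ∈ M.toFinset, M.count w :=
        Finset.sum_le_sum_of_subset Finset.inter_subset_right
    _ = Multiset.card M := Multiset.toFinset_sum_count_eq M

lemma sq_dvd_of_root_deriv {p : Polynomial ℂ} {z : ℂ} (h1 : p.eval z = 0)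
    (h2 : p.derivative.eval z = 0) : (X - C z)^2 ∣ p := by
  obtain ⟨q, hq⟩ := (dvd_iff_isRoot.mpr h1)
  have hq' : q.eval z = 0 := by
    have := congrArg (fun r => Polynomial.eval z (Polynomial.derivative r)) hq
    simp [derivative_mul, eval_add, eval_mul] at this
    simpa [h2] using this.symm
  obtain ⟨r, hr⟩ := (dvd_iff_isRoot.mpr hq')
  exact ⟨r, by rw [hq, hr]; ring⟩

lemma cos_nat_mul_pi' (k : ℕ) : Real.cos (k * π) = (-1)^k := by
  induction k with
  | zero => simp
  | succ m ih => push_cast; rw [add_mul, one_mul, Real.cos_add_pi]; push_cast at ih; rw [ih]; ring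

lemma hasDerivAt_exp_mul (c : ℂ) (θ : ℝ) :
    HasDerivAt (fun θ : ℝ => Complex.exp ((θ:ℂ) * c)) (c * Complex.exp ((θ:ℂ) * c)) θ := by
  have h1 : HasDerivAt (fun θ : ℝ => (θ:ℂ) * c) c θ := by
    simpa using (HasDerivAt.ofReal_comp (hasDerivAt_id θ)).mul_const c
  simpa [smul_eq_mul, mul_comm, Function.comp_def] using (Complex.hasDerivAt_exp ((θ:ℂ)*c)).scomp θ h1

lemma hasDerivAt_re_comp {f : ℝ → ℂ} {D : ℂ} {θ : ℝ} (hf : HasDerivAt f D θ) :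
    HasDerivAt (fun θ => (f θ).re) D.re θ := by
  simpa [Function.comp_def] using (Complex.reCLM.hasFDerivAt.comp_hasDerivAt θ hf)

lemma zmap_inj {x y : ℝ} (hx : 0 ≤ x) (hx2 : x < 2*π) (hy : 0 ≤ y) (hy2 : y < 2*π)
    (h : Complex.exp ((x:ℂ) * I) = Complex.exp ((y:ℂ) * I)) : x = y := by
  have h1 : Complex.exp ((x:ℂ)*I - (y:ℂ)*I) = 1 := by
    rw [Complex.exp_sub, h, div_self (Complex.exp_ne_zero _)]
  rw [Complex.exp_eq_one_iff] at h1
  obtain ⟨k, hk⟩ := h1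
  have h2 : ((x - y : ℝ) : ℂ) = ((2 * π * k : ℝ) : ℂ) := by
    have := mul_right_cancel₀ Complex.I_ne_zero
      (show ((x:ℂ) - y) * I = ((2*π*(k:ℝ) : ℝ):ℂ) * I by push_cast; push_cast at hk; linear_combination hk)
    exact_mod_cast this
  have h3 : x - y = 2 * π * k := by exact_mod_cast Complex.ofReal_injective h2
  have hπ := Real.pi_pos
  have hk1 : (-1 : ℝ) < k := by nlinarith
  have hk2 : (k : ℝ) < 1 := by nlinarith
  have : k = 0 := by
    have a1 : (-1 : ℤ) < k := by exact_mod_cast hk1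
    have a2 : (k : ℤ) < 1 := by exact_mod_cast hk2
    omega
  rw [this] at h3; push_cast at h3; linarith

lemma core_trig (n : ℕ) (hn : 1 ≤ n) (φ : ℝ → ℝ) (G : Polynomial ℂ)
    (hG : ∀ θ : ℝ, G.eval (Complex.exp ((θ:ℂ) * I)) = Complex.exp ((n:ℂ) * θ * I) * ((φ θ : ℝ) : ℂ))
    (hGdeg : G.natDegree ≤ 2 * n)
    (M : ℝ) (hM : 0 < M) (hφ0 : φ 0 = M) (hφle : ∀ θ, |φ θ| ≤ M)
    (θ₀ : ℝ) (hθpos : 0 < θ₀) (hθlt : θ₀ < π / (2 * n)) (hz0 : φ θ₀ = 0) : False := by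
  classical
  have hπ := Real.pi_pos
  have hnR : (0:ℝ) < n := by exact_mod_cast hn
  -- the comparison function
  set g : ℝ → ℝ := fun θ => M * Real.cos (n * θ) - φ θ with hgdef
  set Gg : Polynomial ℂ := Polynomial.C ((M:ℂ)/2) * (X^(2*n) + 1) - G with hGgdef
  set t : ℕ → ℝ := fun k => k * π / n with htdef
  have hnt : ∀ k : ℕ, (n:ℝ) * t k = k * π := by
    intro k; simp only [htdef]; rw [← mul_div_assoc, mul_div_cancel_left₀ _ hnR.ne']
  have htmono : ∀ {j k : ℕ}, j < k → t j < t k := by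
    intro j k hjk
    have h1 : (j:ℝ) < k := by exact_mod_cast hjk
    simp only [htdef]
    have := Real.pi_pos
    apply div_lt_div_of_pos_right ?_ ?_
    · nlinarith
    · exact hnR
  have ht0 : t 0 = 0 := by simp [htdef]
  have htnonneg : ∀ k : ℕ, 0 ≤ t k := by
    intro k
    have : (0:ℝ) ≤ k * π := by positivity
    exact div_nonneg this (le_of_lt hnR)
  have ht2n : t (2*n) = 2*π := by
    simp only [htdef]; push_cast; field_simp
  -- sign pattern on the grid
  have hcosk : ∀ k : ℕ, Real.cos (n * t k) = (-1)^k := by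
    intro k; rw [hnt k, cos_nat_mul_pi']
  have hsign : ∀ k : ℕ, 0 ≤ (-1:ℝ)^k * g (t k) := by
    intro k
    have h1 : g (t k) = M * (-1)^k - φ (t k) := by simp [hgdef, hcosk k]
    have h2 := abs_le.mp (hφle (t k))
    rcases Nat.even_or_odd k with he | ho
    · rw [he.neg_one_pow] at h1 ⊢; nlinarith [h2.1, h2.2]
    · rw [ho.neg_one_pow] at h1 ⊢; nlinarith [h2.1, h2.2]
  -- positivity at θ₀
  have hnθ₀ : (n:ℝ) * θ₀ < π / 2 := by
    have h := hθlt
    rw [lt_div_iff₀ (by positivity : (0:ℝ) < 2 * (n:ℝ))] at h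
    nlinarith
  have hgθ₀ : 0 < g θ₀ := by
    have hc : 0 < Real.cos (n * θ₀) := by
      apply Real.cos_pos_of_mem_Ioo
      constructor
      · nlinarith
      · exact hnθ₀
    simp [hgdef, hz0]
    positivity
  -- evaluation identity for Gg
  have hGg_eval : ∀ θ : ℝ, Gg.eval (Complex.exp ((θ:ℂ) * I)) =
      Complex.exp ((n:ℂ) * θ * I) * ((g θ : ℝ) : ℂ) := by
    intro θ
    have h2c : 2 * Complex.cos ((n:ℂ)*θ) = Complex.exp ((n:ℂ)*θ*I) + Complex.exp (-((n:ℂ)*θ)*I) := by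
      rw [Complex.cos]; ring_nf
    have hmulinv : Complex.exp ((n:ℂ)*θ*I) * Complex.exp (-((n:ℂ)*θ)*I) = 1 := by
      rw [← Complex.exp_add]; ring_nf; exact Complex.exp_zero
    have hpow : (Complex.exp ((θ:ℂ) * I))^(2*n) = Complex.exp ((n:ℂ)*θ*I) * Complex.exp ((n:ℂ)*θ*I) := by
      rw [← Complex.exp_nat_mul, ← Complex.exp_add]
      congr 1; push_cast; ring
    simp only [hGgdef, eval_sub, eval_mul, eval_C, eval_add, eval_pow, eval_X, eval_one, hG θ]
    rw [hpow]
    simp only [hgdef]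
    push_cast
    linear_combination (-(M:ℂ)/2 * Complex.exp ((n:ℂ)*θ*I)) * h2c + (-(M:ℂ)/2) * hmulinv
  -- degree bound and nonvanishing of Gg
  have hGgdeg : Gg.natDegree ≤ 2*n := by
    refine (Polynomial.natDegree_sub_le _ _).trans ?_
    simp only [max_le_iff]
    constructor
    · refine (Polynomial.natDegree_mul_le).trans ?_
      have h1 : (Polynomial.C ((M:ℂ)/2)).natDegree = 0 := Polynomial.natDegree_C _
      have h2 : ((X:Polynomial ℂ)^(2*n) + 1).natDegree ≤ 2*n := by
        refine (Polynomial.natDegree_add_le _ _).trans ?_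
        simp [Polynomial.natDegree_X_pow]
      omega
    · exact hGdeg
  have hGgne : Gg ≠ 0 := by
    intro h0
    have hthis := hGg_eval θ₀
    rw [h0] at hthis
    simp only [Polynomial.eval_zero] at hthis
    have h1 : ((g θ₀ : ℝ):ℂ) = 0 := by
      rcases mul_eq_zero.mp hthis.symm with h | h
      · exact absurd h (Complex.exp_ne_zero _)
      · exact h
    have : g θ₀ = 0 := by exact_mod_cast h1
    linarith
  -- derivative machinery
  set D : ℝ → ℂ := fun θ => ((-(n:ℂ))*I * Complex.exp ((θ:ℂ)*((-(n:ℂ))*I))) * Gg.eval (Complex.exp ((θ:ℂ)*I)) + Complex.exp ((θ:ℂ)*((-(n:ℂ))*I)) * ((I * Complex.exp ((θ:ℂ)*I)) * Gg.derivative.eval (Complex.exp ((θ:ℂ)*I))) with hDdef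
  have hBD : ∀ θ : ℝ, HasDerivAt (fun θ : ℝ => Complex.exp ((θ:ℂ)*((-(n:ℂ))*I)) * Gg.eval (Complex.exp ((θ:ℂ)*I))) (D θ) θ := by
    intro θ
    have e1 : HasDerivAt (fun θ : ℝ => Complex.exp ((θ:ℂ)*((-(n:ℂ))*I))) ((-(n:ℂ))*I * Complex.exp ((θ:ℂ)*((-(n:ℂ))*I))) θ := hasDerivAt_exp_mul _ θ
    have e2 : HasDerivAt (fun θ : ℝ => Gg.eval (Complex.exp ((θ:ℂ)*I))) ((I * Complex.exp ((θ:ℂ)*I)) * Gg.derivative.eval (Complex.exp ((θ:ℂ)*I))) θ := by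
      have h1 := hasDerivAt_exp_mul I θ
      have h2 := Polynomial.hasDerivAt Gg (Complex.exp ((θ:ℂ)*I))
      have := h2.scomp θ h1
      simpa [Function.comp_def, smul_eq_mul, mul_comm, mul_assoc, mul_left_comm] using this
    exact e1.mul e2
  have hBg : ∀ θ : ℝ, Complex.exp ((θ:ℂ)*((-(n:ℂ))*I)) * Gg.eval (Complex.exp ((θ:ℂ)*I)) = ((g θ : ℝ):ℂ) := by
    intro θ
    rw [hGg_eval θ, ← mul_assoc, ← Complex.exp_add,
      show (θ:ℂ)*((-(n:ℂ))*I) + (n:ℂ)*θ*I = 0 by ring, Complex.exp_zero, one_mul]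
  have hgD : ∀ θ : ℝ, HasDerivAt g ((D θ).re) θ := by
    intro θ
    have h := hasDerivAt_re_comp (hBD θ)
    have hfun : (fun θ:ℝ => (Complex.exp ((θ:ℂ)*((-(n:ℂ))*I)) * Gg.eval (Complex.exp ((θ:ℂ)*I))).re) = g := by
      funext x; rw [hBg x]; exact Complex.ofReal_re _
    rwa [hfun] at h
  have hDreal : ∀ θ : ℝ, D θ = (((D θ).re : ℝ) : ℂ) := by
    intro θ
    have h1 : HasDerivAt (fun θ:ℝ => ((g θ:ℝ):ℂ)) (D θ) θ := by
      have h := hBD θ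
      rwa [show (fun θ:ℝ => Complex.exp ((θ:ℂ)*((-(n:ℂ))*I)) * Gg.eval (Complex.exp ((θ:ℂ)*I))) = fun θ:ℝ => ((g θ:ℝ):ℂ) from funext hBg] at h
    exact h1.unique ((hgD θ).ofReal_comp)
  have hgcont : Continuous g := by
    rw [continuous_iff_continuousAt]
    exact fun θ => (hgD θ).continuousAt
  -- derivative of φ
  have hφeq : φ = fun θ => M * Real.cos ((n:ℝ)*θ) - g θ := by
    funext θ; simp [hgdef]
  have hcosD : ∀ θ:ℝ, HasDerivAt (fun θ:ℝ => M * Real.cos ((n:ℝ)*θ)) (-(M * n * Real.sin ((n:ℝ)*θ))) θ := by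
    intro θ
    have h1 : HasDerivAt (fun θ:ℝ => (n:ℝ)*θ) (n:ℝ) θ := by
      simpa using (hasDerivAt_id θ).const_mul (n:ℝ)
    have h2 := (Real.hasDerivAt_cos ((n:ℝ)*θ)).comp θ h1
    have h3 := h2.const_mul M
    exact h3.congr_deriv (by ring)
  have hφD : ∀ θ:ℝ, HasDerivAt φ (-(M * n * Real.sin ((n:ℝ)*θ)) - (D θ).re) θ := by
    intro θ
    rw [hφeq]
    exact (hcosD θ).sub (hgD θ)
  -- double roots at grid zeros
  have hdr : ∀ k : ℕ, g (t k) = 0 → (X - Polynomial.C (Complex.exp ((t k : ℝ) * I)))^2 ∣ Gg := by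
    intro k hgk
    have hroot : Gg.eval (Complex.exp ((t k:ℝ)*I)) = 0 := by
      rw [hGg_eval (t k), hgk]; simp
    have hφτ : (-1:ℝ)^k * φ (t k) = M := by
      have h2 : g (t k) = M * (-1)^k - φ (t k) := by simp [hgdef, hcosk k]
      rcases Nat.even_or_odd k with he | ho
      · rw [he.neg_one_pow]; rw [h2, he.neg_one_pow] at hgk; linarith
      · rw [ho.neg_one_pow]; rw [h2, ho.neg_one_pow] at hgk; linarith
    have hmax : IsLocalMax (fun θ => (-1:ℝ)^k * φ θ) (t k) := by
      refine Filter.Eventually.of_forall ?_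
      intro θ
      have h1 : (-1:ℝ)^k * φ θ ≤ |φ θ| := by
        rcases Nat.even_or_odd k with he | ho
        · rw [he.neg_one_pow, one_mul]; exact le_abs_self _
        · rw [ho.neg_one_pow]; simpa using neg_le_abs (φ θ)
      calc (-1:ℝ)^k * φ θ ≤ |φ θ| := h1
        _ ≤ M := hφle θ
        _ = (-1:ℝ)^k * φ (t k) := hφτ.symm
    have hd0 : (-1:ℝ)^k * (-(M * n * Real.sin ((n:ℝ)*(t k))) - (D (t k)).re) = 0 :=
      hmax.hasDerivAt_eq_zero ((hφD (t k)).const_mul ((-1:ℝ)^k))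
    have hsin : Real.sin ((n:ℝ) * t k) = 0 := by rw [hnt k]; exact Real.sin_nat_mul_pi k
    have hDre : (D (t k)).re = 0 := by
      have hne : ((-1:ℝ)^k) ≠ 0 := pow_ne_zero _ (by norm_num)
      have hs := (mul_eq_zero.mp hd0).resolve_left hne
      rw [hsin] at hs; linarith
    have hD0 : D (t k) = 0 := by rw [hDreal (t k), hDre]; simp
    have hder0 : Gg.derivative.eval (Complex.exp ((t k:ℝ)*I)) = 0 := by
      simp only [hDdef] at hD0
      rw [hroot, mul_zero, zero_add] at hD0
      have h5 := (mul_eq_zero.mp hD0).resolve_left (Complex.exp_ne_zero _)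
      exact (mul_eq_zero.mp h5).resolve_left (mul_ne_zero Complex.I_ne_zero (Complex.exp_ne_zero _))
    exact sq_dvd_of_root_deriv hroot hder0
  -- monotonicity helpers
  have htle : ∀ {j k : ℕ}, j ≤ k → t j ≤ t k := by
    intro j k h
    rcases eq_or_lt_of_le h with rfl | h'
    · exact le_refl _
    · exact (htmono h').le
  have htrev : ∀ {i l : ℕ}, t i < t l → i < l := by
    intro i l h
    by_contra hc
    push_neg at hc
    exact absurd (htle hc) (not_le.mpr h)
  -- the modified left endpoints
  set a : ℕ → ℝ := fun k => if k = 0 then θ₀ else t k with hadef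
  have hta : ∀ k : ℕ, t k ≤ a k := by
    intro k
    by_cases hk : k = 0
    · subst hk; simp only [hadef, if_pos rfl, ht0]; linarith
    · simp [hadef, hk]
  have ha_lt : ∀ k : ℕ, a k < t (k+1) := by
    intro k
    by_cases h0 : k = 0
    · subst h0
      simp only [hadef, if_pos rfl]
      have h1 : t 1 = π / n := by simp [htdef]
      rw [h1]
      have h2 : π / (2*n) < π / n := by
        apply div_lt_div_of_pos_left hπ hnR
        nlinarith
      linarith
    · simp only [hadef, if_neg h0]
      exact htmono (Nat.lt_succ_self k)
  have hga : ∀ k : ℕ, 0 ≤ (-1:ℝ)^k * g (a k) := by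
    intro k
    by_cases h0 : k = 0
    · subst h0; simp only [hadef, if_pos rfl, pow_zero, one_mul]; linarith
    · simp only [hadef, if_neg h0]; exact hsign k
  -- IVT on each interval
  have hIVT : ∀ k : ℕ, g (a k) ≠ 0 → g (t (k+1)) ≠ 0 →
      ∃ x, x ∈ Set.Ioo (t k) (t (k+1)) ∧ g x = 0 := by
    intro k h1 h2
    have hne : ((-1:ℝ)^k) ≠ 0 := pow_ne_zero _ (by norm_num)
    have hha : 0 < (-1:ℝ)^k * g (a k) :=
      (hga k).lt_of_ne (Ne.symm (mul_ne_zero hne h1))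
    have hhb : (-1:ℝ)^k * g (t (k+1)) < 0 := by
      have hs := hsign (k+1)
      have hrw : (-1:ℝ)^(k+1) = -((-1:ℝ)^k) := by ring
      rw [hrw, neg_mul] at hs
      have hle : (-1:ℝ)^k * g (t (k+1)) ≤ 0 := by linarith
      exact hle.lt_of_ne (mul_ne_zero hne h2)
    have hab : a k ≤ t (k+1) := (ha_lt k).le
    have hcont : ContinuousOn (fun θ => (-1:ℝ)^k * g θ) (Set.Icc (a k) (t (k+1))) :=
      (continuous_const.mul hgcont).continuousOn
    obtain ⟨x, hx, hhx⟩ := intermediate_value_Icc' hab hcont ⟨hhb.le, hha.le⟩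
    have hhx' : (-1:ℝ)^k * g x = 0 := hhx
    have hgx : g x = 0 := (mul_eq_zero.mp hhx').resolve_left hne
    have hxa : x ≠ a k := by
      intro h; rw [h] at hhx'; linarith
    have hxb : x ≠ t (k+1) := by
      intro h; rw [h] at hhx'; linarith
    refine ⟨x, ⟨?_, ?_⟩, hgx⟩
    · exact lt_of_le_of_lt (hta k) (lt_of_le_of_ne hx.1 (Ne.symm hxa))
    · exact lt_of_le_of_ne hx.2 hxb
  -- index sets
  set Bf : Finset ℕ := (Finset.Icc 1 (2*n-1)).filter (fun j => g (t j) = 0) with hBfdef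
  set Kf : Finset ℕ := (Finset.range (2*n)).filter (fun k => g (a k) ≠ 0 ∧ g (t (k+1)) ≠ 0) with hKfdef
  have hexK : ∀ k ∈ Kf, ∃ x, x ∈ Set.Ioo (t k) (t (k+1)) ∧ g x = 0 := by
    intro k hk
    rw [hKfdef, Finset.mem_filter] at hk
    exact hIVT k hk.2.1 hk.2.2
  choose! xf hxf1 hxf2 using hexK
  -- covering inequality
  have hcover : Finset.range (2*n) ⊆ Kf ∪ (Bf.biUnion (fun j => {j-1, j}) ∪ {2*n-1}) := by
    intro k hk
    rw [Finset.mem_range] at hk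
    by_cases hkK : k ∈ Kf
    · exact Finset.mem_union_left _ hkK
    · apply Finset.mem_union_right
      have hor : g (a k) = 0 ∨ g (t (k+1)) = 0 := by
        by_contra hcon
        push_neg at hcon
        exact hkK (by rw [hKfdef]; exact Finset.mem_filter.mpr ⟨Finset.mem_range.mpr hk, hcon.1, hcon.2⟩)
      by_cases h0 : k = 0
      · subst h0
        have hg1 : g (t 1) = 0 := by
          rcases hor with h | h
          · exfalso; simp only [hadef, if_pos rfl] at h; linarith
          · exact h
        apply Finset.mem_union_left
        apply Finset.mem_biUnion.mpr
        refine ⟨1, ?_, by simp⟩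
        rw [hBfdef]
        exact Finset.mem_filter.mpr ⟨Finset.mem_Icc.mpr ⟨le_refl 1, by omega⟩, hg1⟩
      · rcases hor with h | h
        · simp only [hadef, if_neg h0] at h
          apply Finset.mem_union_left
          apply Finset.mem_biUnion.mpr
          refine ⟨k, ?_, by simp⟩
          rw [hBfdef]
          exact Finset.mem_filter.mpr ⟨Finset.mem_Icc.mpr ⟨by omega, by omega⟩, h⟩
        · by_cases hlast : k = 2*n - 1
          · subst hlast
            apply Finset.mem_union_right
            simp
          · apply Finset.mem_union_left
            apply Finset.mem_biUnion.mpr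
            refine ⟨k+1, ?_, by simp⟩
            rw [hBfdef]
            exact Finset.mem_filter.mpr ⟨Finset.mem_Icc.mpr ⟨by omega, by omega⟩, h⟩
  have hcard : 2*n ≤ Kf.card + (2 * Bf.card + 1) := by
    have h1 := Finset.card_le_card hcover
    rw [Finset.card_range] at h1
    have h2 := Finset.card_union_le Kf (Bf.biUnion (fun j => {j-1, j}) ∪ {2*n-1})
    have h3 := Finset.card_union_le (Bf.biUnion (fun j => {j-1, j})) ({2*n-1} : Finset ℕ)
    have h4 := Finset.card_biUnion_le (s := Bf) (t := fun j => ({j-1, j} : Finset ℕ))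
    have h6 : ∑ j ∈ Bf, ({j-1, j} : Finset ℕ).card ≤ 2 * Bf.card := by
      calc ∑ j ∈ Bf, ({j-1, j} : Finset ℕ).card ≤ ∑ _j ∈ Bf, 2 :=
            Finset.sum_le_sum (fun j _ => (Finset.card_insert_le _ _).trans (by simp))
        _ = 2 * Bf.card := by rw [Finset.sum_const]; ring
    simp only [Finset.card_singleton] at h3
    omega
  -- ranges of the special angles
  have hBrange : ∀ j ∈ Bf, 1 ≤ j ∧ j ≤ 2*n-1 := by
    intro j hj
    rw [hBfdef, Finset.mem_filter, Finset.mem_Icc] at hj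
    exact hj.1
  have hBzero : ∀ j ∈ Bf, g (t j) = 0 := by
    intro j hj
    rw [hBfdef, Finset.mem_filter] at hj
    exact hj.2
  have hBmem : ∀ j ∈ Bf, 0 < t j ∧ t j < 2*π := by
    intro j hj
    obtain ⟨h1, h2⟩ := hBrange j hj
    constructor
    · calc (0:ℝ) = t 0 := ht0.symm
        _ < t j := htmono (by omega)
    · calc t j < t (2*n) := htmono (by omega)
        _ = 2*π := ht2n
  have hKmem : ∀ k ∈ Kf, 0 < xf k ∧ xf k < 2*π := by
    intro k hk
    have hx := hxf1 k hk
    have hkr : k < 2*n := by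
      rw [hKfdef, Finset.mem_filter, Finset.mem_range] at hk
      exact hk.1
    constructor
    · calc (0:ℝ) = t 0 := ht0.symm
        _ ≤ t k := htle (Nat.zero_le k)
        _ < xf k := hx.1
    · calc xf k < t (k+1) := hx.2
        _ ≤ t (2*n) := htle (by omega)
        _ = 2*π := ht2n
  -- the finset of roots on the unit circle
  set T : Finset ℂ := ({Complex.exp ((0:ℝ) * I)} ∪ Bf.image (fun j => Complex.exp ((t j : ℝ) * I)))
      ∪ Kf.image (fun k => Complex.exp ((xf k : ℝ) * I)) with hTdef
  -- count lower bounds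
  have hcount2 : ∀ k : ℕ, g (t k) = 0 → 2 ≤ (Gg.roots).count (Complex.exp ((t k : ℝ) * I)) := by
    intro k hgk
    rw [Polynomial.count_roots]
    exact (Polynomial.le_rootMultiplicity_iff hGgne).mpr (hdr k hgk)
  have hcount1 : ∀ x : ℝ, g x = 0 → 1 ≤ (Gg.roots).count (Complex.exp ((x : ℝ) * I)) := by
    intro x hgx
    rw [Polynomial.count_roots]
    apply (Polynomial.le_rootMultiplicity_iff hGgne).mpr
    rw [pow_one]
    apply dvd_iff_isRoot.mpr
    rw [Polynomial.IsRoot, hGg_eval x, hgx]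
    simp
  have hg0 : g (t 0) = 0 := by
    rw [ht0]
    simp [hgdef, hφ0]
  -- disjointness
  have d1 : Disjoint ({Complex.exp ((0:ℝ) * I)} : Finset ℂ) (Bf.image (fun j => Complex.exp ((t j : ℝ) * I))) := by
    rw [Finset.disjoint_left]
    intro w hw hw2
    rw [Finset.mem_singleton] at hw
    rw [Finset.mem_image] at hw2
    obtain ⟨j, hj, hje⟩ := hw2
    obtain ⟨hj1, hj2⟩ := hBmem j hj
    have : t j = 0 := zmap_inj (le_of_lt hj1) hj2 (le_refl 0) (by linarith) (by rw [hje, hw])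
    linarith
  have d2 : Disjoint (({Complex.exp ((0:ℝ) * I)} : Finset ℂ) ∪ Bf.image (fun j => Complex.exp ((t j : ℝ) * I)))
      (Kf.image (fun k => Complex.exp ((xf k : ℝ) * I))) := by
    rw [Finset.disjoint_left]
    intro w hw hw2
    rw [Finset.mem_image] at hw2
    obtain ⟨k, hk, hke⟩ := hw2
    obtain ⟨hk1, hk2⟩ := hKmem k hk
    rw [Finset.mem_union] at hw
    rcases hw with hw | hw
    · rw [Finset.mem_singleton] at hw
      have : xf k = 0 := zmap_inj (le_of_lt hk1) hk2 (le_refl 0) (by linarith) (by rw [hke, hw])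
      linarith
    · rw [Finset.mem_image] at hw
      obtain ⟨j, hj, hje⟩ := hw
      obtain ⟨hj1, hj2⟩ := hBmem j hj
      have heq : xf k = t j := zmap_inj (le_of_lt hk1) hk2 (le_of_lt hj1) hj2 (by rw [hke, hje])
      have hx := hxf1 k hk
      have c1 : k < j := htrev (by rw [← heq]; exact hx.1)
      have c2 : j < k + 1 := htrev (by rw [← heq]; exact hx.2)
      omega
  -- injectivity on images
  have hinjB : ∀ x ∈ Bf, ∀ y ∈ Bf,
      Complex.exp ((t x : ℝ) * I) = Complex.exp ((t y : ℝ) * I) → x = y := by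
    intro x hx y hy h
    obtain ⟨hx1, hx2⟩ := hBmem x hx
    obtain ⟨hy1, hy2⟩ := hBmem y hy
    have heq : t x = t y := zmap_inj (le_of_lt hx1) hx2 (le_of_lt hy1) hy2 h
    rcases lt_trichotomy x y with hc | hc | hc
    · exact absurd (htmono hc) (by rw [heq]; exact lt_irrefl _)
    · exact hc
    · exact absurd (htmono hc) (by rw [heq]; exact lt_irrefl _)
  have hinjK : ∀ x ∈ Kf, ∀ y ∈ Kf,
      Complex.exp ((xf x : ℝ) * I) = Complex.exp ((xf y : ℝ) * I) → x = y := by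
    intro x hx y hy h
    obtain ⟨hx1, hx2⟩ := hKmem x hx
    obtain ⟨hy1, hy2⟩ := hKmem y hy
    have heq : xf x = xf y := zmap_inj (le_of_lt hx1) hx2 (le_of_lt hy1) hy2 h
    rcases lt_trichotomy x y with hc | hc | hc
    · have : xf x < xf y := by
        calc xf x < t (x+1) := (hxf1 x hx).2
          _ ≤ t y := htle (by omega)
          _ < xf y := (hxf1 y hy).1
      rw [heq] at this; exact absurd this (lt_irrefl _)
    · exact hc
    · have : xf y < xf x := by
        calc xf y < t (y+1) := (hxf1 y hy).2
          _ ≤ t x := htle (by omega)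
          _ < xf x := (hxf1 x hx).1
      rw [heq] at this; exact absurd this (lt_irrefl _)
  -- lower bound for the sum of counts
  have hsum : 2 + (2 * Bf.card + Kf.card) ≤ ∑ w ∈ T, (Gg.roots).count w := by
    rw [hTdef, Finset.sum_union d2, Finset.sum_union d1]
    have s1 : 2 ≤ ∑ w ∈ ({Complex.exp ((0:ℝ) * I)} : Finset ℂ), (Gg.roots).count w := by
      rw [Finset.sum_singleton]
      have := hcount2 0 hg0
      rwa [ht0] at this
    have s2 : 2 * Bf.card ≤ ∑ w ∈ Bf.image (fun j => Complex.exp ((t j : ℝ) * I)), (Gg.roots).count w := by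
      rw [Finset.sum_image hinjB]
      calc 2 * Bf.card = ∑ _j ∈ Bf, 2 := by rw [Finset.sum_const]; ring
        _ ≤ ∑ j ∈ Bf, (Gg.roots).count (Complex.exp ((t j : ℝ) * I)) :=
            Finset.sum_le_sum (fun j hj => hcount2 j (hBzero j hj))
    have s3 : Kf.card ≤ ∑ w ∈ Kf.image (fun k => Complex.exp ((xf k : ℝ) * I)), (Gg.roots).count w := by
      rw [Finset.sum_image hinjK]
      calc Kf.card = ∑ _k ∈ Kf, 1 := by rw [Finset.sum_const]; ring
        _ ≤ ∑ k ∈ Kf, (Gg.roots).count (Complex.exp ((xf k : ℝ) * I)) :=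
            Finset.sum_le_sum (fun k hk => hcount1 (xf k) (hxf2 k hk))
    omega
  have hfin : (∑ w ∈ T, (Gg.roots).count w) ≤ 2*n :=
    le_trans (sum_count_le T Gg.roots) (le_trans (Polynomial.card_roots' Gg) hGgdeg)
  omega

set_option maxHeartbeats 1000000 in
/-- If a real polynomial `P` in `d` variables of degree at most `n` attains its
maximal absolute value on the unit sphere `S^{d-1}` at `p`, and `P` is not identically zero on the
sphere, then every zero `q` of `P` on the sphere is at angular distance at least `π/(2n)` from `p`. -/
theorem real_sphere_polynomial_zero_avoidance
    (d n : ℕ) (hn : 1 ≤ n) (P : MvPolynomial (Fin d) ℝ)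
    (hdeg : P.totalDegree ≤ n)
    (p : EuclideanSpace ℝ (Fin d)) (hp : ‖p‖ = 1)
    (hmax : ∀ x : EuclideanSpace ℝ (Fin d), ‖x‖ = 1 →
      |MvPolynomial.eval (fun i => x i) P| ≤ |MvPolynomial.eval (fun i => p i) P|)
    (hnz : ∃ x : EuclideanSpace ℝ (Fin d), ‖x‖ = 1 ∧ MvPolynomial.eval (fun i => x i) P ≠ 0) :
    ∀ q : EuclideanSpace ℝ (Fin d), ‖q‖ = 1 → MvPolynomial.eval (fun i => q i) P = 0 →
      Real.arccos (inner ℝ p q : ℝ) ≥ π / (2 * n) := by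
  intro q hq hPq
  by_contra hcon
  push_neg at hcon
  have hπ := Real.pi_pos
  have hnR : (0:ℝ) < n := by exact_mod_cast hn
  set c : ℝ := (inner ℝ p q : ℝ) with hcdef
  have hc1 : |c| ≤ 1 := by
    have h := abs_real_inner_le_norm p q
    rwa [hp, hq, one_mul] at h
  have hc1' := abs_le.mp hc1
  set θ₀ : ℝ := Real.arccos c with hθdef
  have hθlt : θ₀ < π / (2*n) := hcon
  have hcos : Real.cos θ₀ = c := Real.cos_arccos hc1'.1 hc1'.2
  obtain ⟨x₀, hx₀, hx₀ne⟩ := hnz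
  set e : ℝ := MvPolynomial.eval (fun i => p i) P with hedef
  have hMpos : 0 < |e| := lt_of_lt_of_le (abs_pos.mpr hx₀ne) (hmax x₀ hx₀)
  have hθpos : 0 < θ₀ := by
    rcases (Real.arccos_nonneg c).lt_or_eq with h | h
    · exact h
    · exfalso
      have hcq : c = 1 := by rw [← hcos, hθdef, ← h, Real.cos_zero]
      have hpq : p = q := (inner_eq_one_iff_of_norm_eq_one hp hq).mp (by rw [hcdef] at hcq; exact_mod_cast hcq)
      have he0 : e = 0 := by rw [hedef, hpq, hPq]
      rw [he0] at hMpos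
      simp at hMpos
  have hθπ2 : θ₀ * (2*n) < π := by
    have h2 := hθlt
    rw [lt_div_iff₀ (by positivity : (0:ℝ) < 2*(n:ℝ))] at h2
    exact h2
  have hn1 : (1:ℝ) ≤ n := by exact_mod_cast hn
  have hθltπ : θ₀ < π := by nlinarith
  have hsin : 0 < Real.sin θ₀ := Real.sin_pos_of_pos_of_lt_pi hθpos hθltπ
  have hsinne : Real.sin θ₀ ≠ 0 := ne_of_gt hsin
  have hsin2 : Real.sin θ₀ ^ 2 = 1 - c^2 := by
    have h := Real.sin_sq_add_cos_sq θ₀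
    rw [hcos] at h
    linarith
  set u : EuclideanSpace ℝ (Fin d) := (Real.sin θ₀)⁻¹ • (q - c • p) with hudef
  have hp2 : (inner ℝ p p : ℝ) = 1 := by
    rw [real_inner_self_eq_norm_sq, hp]
    norm_num
  have hqp : (inner ℝ q p : ℝ) = c := by rw [real_inner_comm]
  have hpu : (inner ℝ p u : ℝ) = 0 := by
    rw [hudef, real_inner_smul_right, inner_sub_right, real_inner_smul_right, hp2]
    rw [show (inner ℝ p q : ℝ) = c from rfl]
    ring
  have hqcp : ‖q - c • p‖^2 = 1 - c^2 := by
    rw [norm_sub_sq_real, hq, norm_smul, hp, real_inner_smul_right, hqp, Real.norm_eq_abs]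
    rw [mul_one, _root_.sq_abs]
    ring
  have hu2 : ‖u‖^2 = 1 := by
    rw [hudef, norm_smul, Real.norm_eq_abs, mul_pow, _root_.sq_abs, hqcp, ← hsin2]
    field_simp
  have hunorm : ‖u‖ = 1 := by
    have h3 : (‖u‖ - 1) * (‖u‖ + 1) = 0 := by linear_combination hu2
    rcases mul_eq_zero.mp h3 with h4 | h4
    · linarith
    · linarith [norm_nonneg u]
  have hγnorm : ∀ θ : ℝ, ‖(Real.cos θ) • p + (Real.sin θ) • u‖ = 1 := by
    intro θ
    have h := norm_add_sq_real ((Real.cos θ) • p) ((Real.sin θ) • u)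
    rw [norm_smul, norm_smul, hp, hunorm, real_inner_smul_left, real_inner_smul_right, hpu,
      Real.norm_eq_abs, Real.norm_eq_abs] at h
    have h2 : ‖(Real.cos θ) • p + (Real.sin θ) • u‖^2 = 1 := by
      rw [h, mul_one, mul_one, _root_.sq_abs, _root_.sq_abs]
      linear_combination Real.sin_sq_add_cos_sq θ
    have h3 : (‖(Real.cos θ) • p + (Real.sin θ) • u‖ - 1) * (‖(Real.cos θ) • p + (Real.sin θ) • u‖ + 1) = 0 := by
      linear_combination h2
    rcases mul_eq_zero.mp h3 with h4 | h4
    · linarith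
    · linarith [norm_nonneg ((Real.cos θ) • p + (Real.sin θ) • u)]
  have hγq : (Real.cos θ₀) • p + (Real.sin θ₀) • u = q := by
    rw [hcos, hudef, smul_smul, mul_inv_cancel₀ hsinne, one_smul, add_sub_cancel]
  have hcoord : ∀ (θ : ℝ) (i : Fin d), ((Real.cos θ) • p + (Real.sin θ) • u) i
      = Real.cos θ * p i + Real.sin θ * u i := by
    intro θ i
    simp [PiLp.add_apply, PiLp.smul_apply, smul_eq_mul]
  set ε : ℝ := if 0 ≤ e then (1:ℝ) else -1 with hεdef
  have hεabs : |ε| = 1 := by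
    rw [hεdef]; split_ifs <;> simp
  have hεe : ε * e = |e| := by
    rw [hεdef]; split_ifs with h
    · rw [_root_.abs_of_nonneg h]; ring
    · rw [_root_.abs_of_neg (not_le.mp h)]; ring
  set φ : ℝ → ℝ := fun θ => ε * MvPolynomial.eval (fun i => Real.cos θ * p i + Real.sin θ * u i) P with hφdef
  set G : Polynomial ℂ := Polynomial.C ((ε:ℝ):ℂ) * Gf n (fun i => p i) (fun i => u i) P with hGdef2
  refine core_trig n hn φ G ?_ ?_ |e| hMpos ?_ ?_ θ₀ hθpos hθlt ?_
  · intro θ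
    rw [hGdef2, Polynomial.eval_mul, Polynomial.eval_C, Gf_eval n _ _ P hdeg θ, hφdef]
    push_cast
    ring
  · rw [hGdef2]
    exact (Polynomial.natDegree_C_mul_le _ _).trans (Gf_natDegree n _ _ P hdeg)
  · show φ 0 = |e|
    rw [hφdef]
    simp only [Real.cos_zero, Real.sin_zero]
    have hfun : (fun i => 1 * p i + 0 * u i) = fun i => p i := by funext i; ring
    rw [hfun, ← hedef]
    exact hεe
  · intro θ
    show |φ θ| ≤ |e|
    rw [hφdef]
    simp only []
    rw [abs_mul, hεabs, one_mul]
    have hx := hmax ((Real.cos θ) • p + (Real.sin θ) • u) (hγnorm θ)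
    have hfun : (fun i => ((Real.cos θ) • p + (Real.sin θ) • u) i)
        = fun i => Real.cos θ * p i + Real.sin θ * u i := funext (hcoord θ)
    rw [hfun] at hx
    exact hx
  · show φ θ₀ = 0
    rw [hφdef]
    have hfun : (fun i => Real.cos θ₀ * p i + Real.sin θ₀ * u i) = fun i => q i := by
      funext i
      rw [← hcoord θ₀ i, hγq]
    simp only [hfun]
    rw [hPq, mul_zero]

end
end

section
/- If a trigonometric polynomial T of degree n attains its maximal absolute value M = |T(0)| > 0 at 0, and also has a zero at x₀ with |x₀| = π/(2n), then T(x) = ±M cos(nx) for all x. -/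
open Real Finset

section TrigPolyAux
open Polynomial


lemma expI_inj {s t : ℝ} (hs0 : 0 ≤ s) (hs : s < 2*π) (ht0 : 0 ≤ t) (ht : t < 2*π)
    (h : Complex.exp (s * Complex.I) = Complex.exp (t * Complex.I)) : s = t := by
  rw [Complex.exp_eq_exp_iff_exists_int] at h
  obtain ⟨k, hk⟩ := h
  have h3 : s = t + k * (2*π) := by
    have hI : (Complex.I : ℂ) ≠ 0 := Complex.I_ne_zero
    have : (s : ℂ) * Complex.I = ((t + k * (2*π) : ℝ) : ℂ) * Complex.I := by
      push_cast; linear_combination hk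
    have h2 := mul_right_cancel₀ hI this
    exact_mod_cast h2
  have hπ := Real.pi_pos
  have hk0 : k = 0 := by
    rcases lt_trichotomy k 0 with hlt | he | hgt
    · exfalso
      have hk1 : k ≤ -1 := by omega
      have : (k : ℝ) ≤ -1 := by exact_mod_cast hk1
      nlinarith
    · exact he
    · exfalso
      have : (1 : ℝ) ≤ (k : ℝ) := by exact_mod_cast hgt
      nlinarith
  rw [hk0] at h3; simpa using h3

lemma sum_ite_single_le {α : Type*} [DecidableEq α] (s : Finset ℕ) (w : ℕ → α) (μ : ℕ → ℕ)
    (a : α) (B : ℕ) (hB : ∀ k ∈ s, μ k ≠ 0 → w k = a → μ k ≤ B)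
    (huniq : ∀ k ∈ s, ∀ j ∈ s, μ k ≠ 0 → μ j ≠ 0 → w k = w j → k = j) :
    (∑ k ∈ s, if w k = a then μ k else 0) ≤ B := by
  by_cases hex : ∃ k₀ ∈ s, μ k₀ ≠ 0 ∧ w k₀ = a
  · obtain ⟨k₀, hk₀s, hμ, ha⟩ := hex
    have : (∑ k ∈ s, if w k = a then μ k else 0) = μ k₀ := by
      rw [Finset.sum_eq_single_of_mem k₀ hk₀s]
      · simp [ha]
      · intro j hj hjne
        by_cases hμj : μ j = 0
        · simp [hμj]
        · by_cases haj : w j = a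
          · exact absurd (huniq j hj k₀ hk₀s hμj hμ (by rw [haj, ha])) hjne
          · simp [haj]
    rw [this]
    exact hB k₀ hk₀s hμ ha
  · push_neg at hex
    have : (∑ k ∈ s, if w k = a then μ k else 0) = 0 := by
      apply Finset.sum_eq_zero
      intro k hk
      split_ifs with haj
      · by_contra hne; exact (hex k hk hne) haj
      · rfl
    simp [this]

lemma chain_sum (N : ℕ) (hN : 0 < N) (c : ℕ → ℕ) (h0 : c 0 = 2)
    (hch : ∀ k, k + 1 < N → c k = 0 → c (k+1) = 2) :
    N ≤ ∑ k ∈ Finset.range N, c k := by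
  classical
  set P0 := (Finset.range N).filter (fun k => c k = 0) with hP0
  set P2 := (Finset.range N).filter (fun k => c k = 2) with hP2
  have hinj : P0.card ≤ P2.card := by
    apply Finset.card_le_card_of_injOn (fun k => (k+1) % N)
    · intro k hk
      simp only [hP0, Finset.mem_coe, Finset.mem_filter, Finset.mem_range] at hk
      obtain ⟨hkN, hck⟩ := hk
      simp only [hP2, Finset.mem_coe, Finset.mem_filter, Finset.mem_range]
      rcases eq_or_lt_of_le (Nat.succ_le_of_lt hkN) with he | hlt
      · have he' : k + 1 = N := he
        rw [he', Nat.mod_self]; exact ⟨hN, h0⟩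
      · have : (k+1) % N = k+1 := Nat.mod_eq_of_lt hlt
        rw [this]; exact ⟨hlt, hch k hlt hck⟩
    · intro k hk j hj hkj
      dsimp only at hkj
      simp only [hP0, Finset.coe_filter, Set.mem_setOf_eq, Finset.mem_range] at hk hj
      have h1 : k + 1 ≤ N := hk.1
      have h2 : j + 1 ≤ N := hj.1
      rcases eq_or_lt_of_le h1 with he1 | hl1 <;> rcases eq_or_lt_of_le h2 with he2 | hl2
      · omega
      · rw [he1, Nat.mod_self, Nat.mod_eq_of_lt hl2] at hkj; omega
      · rw [he2, Nat.mod_self, Nat.mod_eq_of_lt hl1] at hkj; omega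
      · rw [Nat.mod_eq_of_lt hl1, Nat.mod_eq_of_lt hl2] at hkj; omega
  have hpt : ∀ k, c k ≥ (if c k = 0 then 0 else 1) + (if c k = 2 then 1 else 0) := by
    intro k
    by_cases h0' : c k = 0 <;> by_cases h2' : c k = 2 <;> simp [h0', h2'] <;> omega
  have hsplit := Finset.card_filter_add_card_filter_not (s := Finset.range N)
    (p := fun k => c k = 0)
  rw [← hP0] at hsplit
  simp only [Finset.card_range] at hsplit
  calc N = (N - P0.card) + P0.card := by omega
    _ ≤ (N - P0.card) + P2.card := by omega
    _ = ((Finset.range N).filter (fun k => ¬ c k = 0)).card + P2.card := by omega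
    _ = (∑ k ∈ Finset.range N, if c k = 0 then 0 else 1) + ∑ k ∈ Finset.range N, (if c k = 2 then 1 else 0) := by
          rw [Finset.card_filter, Finset.card_filter]
          congr 1
          apply Finset.sum_congr rfl
          intro k _
          by_cases h : c k = 0 <;> simp [h]
    _ = ∑ k ∈ Finset.range N, ((if c k = 0 then 0 else 1) + (if c k = 2 then 1 else 0)) := by
          rw [Finset.sum_add_distrib]
    _ ≤ ∑ k ∈ Finset.range N, c k := Finset.sum_le_sum (fun k _ => hpt k)

noncomputable def trigQ (n : ℕ) (A B : ℕ → ℝ) : Polynomial ℂ :=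
  Polynomial.C (A 0 : ℂ) * Polynomial.X ^ n +
    ∑ k ∈ Finset.Icc 1 n,
      (Polynomial.C (((A k : ℂ) - (B k : ℂ) * Complex.I) / 2) * Polynomial.X ^ (n + k) +
       Polynomial.C (((A k : ℂ) + (B k : ℂ) * Complex.I) / 2) * Polynomial.X ^ (n - k))

lemma trigQ_natDegree_le (n : ℕ) (A B : ℕ → ℝ) : (trigQ n A B).natDegree ≤ 2 * n := by
  unfold trigQ
  apply (Polynomial.natDegree_add_le _ _).trans
  apply max_le
  · exact (Polynomial.natDegree_C_mul_X_pow_le _ _).trans (by omega)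
  · apply Polynomial.natDegree_sum_le_of_forall_le
    intro k hk
    simp only [Finset.mem_Icc] at hk
    apply (Polynomial.natDegree_add_le _ _).trans
    apply max_le
    · exact (Polynomial.natDegree_C_mul_X_pow_le _ _).trans (by omega)
    · exact (Polynomial.natDegree_C_mul_X_pow_le _ _).trans (by omega)

lemma trigQ_eval (n : ℕ) (A B : ℕ → ℝ) (x : ℝ) :
    (trigQ n A B).eval (Complex.exp (x * Complex.I)) =
      Complex.exp (n * x * Complex.I) *
        ((A 0 + ∑ k ∈ Finset.Icc 1 n, (A k * Real.cos (k * x) + B k * Real.sin (k * x)) : ℝ) : ℂ) := by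
  have hu : ∀ m : ℕ, Complex.exp (x * Complex.I) ^ m = Complex.exp ((m : ℂ) * x * Complex.I) := by
    intro m
    rw [← Complex.exp_nat_mul]; ring_nf
  have hφ : ∀ θ : ℝ, Complex.exp ((θ:ℂ) * Complex.I) = (Real.cos θ : ℂ) + (Real.sin θ : ℂ) * Complex.I := by
    intro θ
    rw [Complex.exp_mul_I, Complex.ofReal_cos, Complex.ofReal_sin]
  unfold trigQ
  rw [Polynomial.eval_add, Polynomial.eval_mul, Polynomial.eval_pow, Polynomial.eval_C,
    Polynomial.eval_X, Polynomial.eval_finset_sum]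
  push_cast
  rw [mul_add, Finset.mul_sum]
  congr 1
  · rw [hu n]; ring
  · apply Finset.sum_congr rfl
    intro k hk
    simp only [Finset.mem_Icc] at hk
    obtain ⟨hk1, hkn⟩ := hk
    rw [Polynomial.eval_add, Polynomial.eval_mul, Polynomial.eval_mul, Polynomial.eval_pow,
      Polynomial.eval_pow, Polynomial.eval_C, Polynomial.eval_C, Polynomial.eval_X]
    set u := Complex.exp (x * Complex.I) with hudef
    have huk : u ^ k = (Real.cos (k*x) : ℂ) + (Real.sin (k*x) : ℂ) * Complex.I := by
      rw [hu k]
      have : (k : ℂ) * x * Complex.I = ((k * x : ℝ) : ℂ) * Complex.I := by push_cast; ring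
      rw [this, hφ]
    set c := (Real.cos (k*x) : ℂ) with hc
    set s := (Real.sin (k*x) : ℂ) with hs
    have hcs : c^2 + s^2 = 1 := by
      have h2 : ((Real.cos (k*x))^2 + (Real.sin (k*x))^2 : ℝ) = 1 := by
        linarith [Real.sin_sq_add_cos_sq (k*x)]
      rw [hc, hs]; exact_mod_cast h2
    have h2 : (c + s*Complex.I) * (c - s*Complex.I) = 1 := by
      linear_combination hcs + (-(s^2)) * Complex.I_sq
    have hunk : u^(n-k) = u^n * (c - s*Complex.I) := by
      calc u^(n-k) = u^(n-k) * ((c + s*Complex.I)*(c - s*Complex.I)) := by rw [h2, mul_one]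
        _ = (u^(n-k) * u^k) * (c - s*Complex.I) := by rw [huk]; ring
        _ = u^n * (c - s*Complex.I) := by rw [← pow_add, Nat.sub_add_cancel hkn]
    have hcc : c = Complex.cos ((k:ℂ) * (x:ℂ)) := by rw [hc, Complex.ofReal_cos]; norm_cast
    have hss : s = Complex.sin ((k:ℂ) * (x:ℂ)) := by rw [hs, Complex.ofReal_sin]; norm_cast
    rw [pow_add, huk, hunk, ← hu n]
    linear_combination (-(u^n) * (B k : ℂ) * s) * Complex.I_sq + ((A k : ℂ) * u^n) * hcc + ((B k:ℂ) * u^n) * hss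

section helpers

lemma hasDerivAt_cos_mul (c x : ℝ) :
    HasDerivAt (fun y : ℝ => Real.cos (c * y)) (-Real.sin (c * x) * c) x := by
  simpa [Function.comp_def] using (Real.hasDerivAt_cos (c * x)).comp x ((hasDerivAt_id x).const_mul c)

lemma hasDerivAt_sin_mul (c x : ℝ) :
    HasDerivAt (fun y : ℝ => Real.sin (c * y)) (Real.cos (c * x) * c) x := by
  simpa [Function.comp_def] using (Real.hasDerivAt_sin (c * x)).comp x ((hasDerivAt_id x).const_mul c)

end helpers

lemma main_lemma_s3 (n : ℕ) (hn : 1 ≤ n) (a b : ℕ → ℝ) (M : ℝ) (T : ℝ → ℝ)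
    (hT : ∀ x, T x = a 0 + ∑ k ∈ Finset.Icc 1 n, (a k * Real.cos (k * x) + b k * Real.sin (k * x)))
    (hMpos : 0 < M) (hmax : ∀ x, |T x| ≤ M) (hT0 : T 0 = M) (hTz : T (π / (2 * n)) = 0) :
    ∀ x, T x = M * Real.cos (n * x) := by
  classical
  have hπ := Real.pi_pos
  have hnR : (0:ℝ) < n := by exact_mod_cast hn
  set A : ℕ → ℝ := fun k => (if k = n then M else 0) - a k with hA
  set B : ℕ → ℝ := fun k => -b k with hB
  set R : ℝ → ℝ := fun x => A 0 + ∑ k ∈ Finset.Icc 1 n,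
    (A k * Real.cos (k * x) + B k * Real.sin (k * x)) with hR
  have hRT : ∀ x, R x = M * Real.cos (n * x) - T x := by
    intro x
    rw [hT x]
    simp only [hR, hA, hB]
    have h0n : ¬ ((0:ℕ) = n) := by omega
    rw [if_neg h0n]
    have hsum : ∑ k ∈ Finset.Icc 1 n,
        (((if k = n then M else 0) - a k) * Real.cos (k*x) + (-b k) * Real.sin (k*x))
        = (∑ k ∈ Finset.Icc 1 n, (if k = n then M else 0) * Real.cos (k*x))
          - ∑ k ∈ Finset.Icc 1 n, (a k * Real.cos (k*x) + b k * Real.sin (k*x)) := by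
      rw [← Finset.sum_sub_distrib]
      apply Finset.sum_congr rfl
      intros; ring
    rw [hsum, Finset.sum_eq_single n]
    · rw [if_pos rfl]; ring
    · intro k hk hkn; rw [if_neg hkn]; ring
    · intro hnm; exact absurd (Finset.mem_Icc.mpr ⟨hn, le_refl n⟩) hnm
  have hRfun : R = fun x => M * Real.cos ((n:ℝ) * x) - T x := funext hRT
  -- derivatives
  set dR : ℝ → ℝ := fun x => ∑ k ∈ Finset.Icc 1 n,
    (A k * (-Real.sin (k*x) * k) + B k * (Real.cos (k*x) * k)) with hdRdef
  have hdR : ∀ x, HasDerivAt R (dR x) x := by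
    intro x
    apply HasDerivAt.const_add
    apply HasDerivAt.fun_sum
    intro k _
    exact ((hasDerivAt_cos_mul k x).const_mul (A k)).add ((hasDerivAt_sin_mul k x).const_mul (B k))
  set dT : ℝ → ℝ := fun x => ∑ k ∈ Finset.Icc 1 n,
    (a k * (-Real.sin (k*x) * k) + b k * (Real.cos (k*x) * k)) with hdTdef
  have hTfun : T = fun x => a 0 + ∑ k ∈ Finset.Icc 1 n,
      (a k * Real.cos (k * x) + b k * Real.sin (k * x)) := funext hT
  have hdT : ∀ x, HasDerivAt T (dT x) x := by
    intro x
    rw [hTfun]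
    apply HasDerivAt.const_add
    apply HasDerivAt.fun_sum
    intro k _
    exact ((hasDerivAt_cos_mul k x).const_mul (a k)).add ((hasDerivAt_sin_mul k x).const_mul (b k))
  have hRc : Continuous R := continuous_iff_continuousAt.mpr (fun x => (hdR x).continuousAt)
  -- grid points
  set tp : ℕ → ℝ := fun k => k * π / n with htp
  have htp_mono : ∀ {k j : ℕ}, k < j → tp k < tp j := by
    intro k j hkj
    simp only [htp]
    have : (k:ℝ) < j := by exact_mod_cast hkj
    gcongr
  have htp_le : ∀ {k j : ℕ}, k ≤ j → tp k ≤ tp j := by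
    intro k j hkj
    rcases eq_or_lt_of_le hkj with rfl | h
    · exact le_refl _
    · exact (htp_mono h).le
  have htp_nonneg : ∀ k, 0 ≤ tp k := by
    intro k; simp only [htp]; positivity
  have htp0 : tp 0 = 0 := by simp [htp]
  have htp2n : tp (2*n) = 2*π := by
    simp only [htp]; push_cast; field_simp
  have hntp : ∀ k : ℕ, (n:ℝ) * tp k = k * π := by
    intro k; simp only [htp]; field_simp
  have hcosk : ∀ k : ℕ, Real.cos ((n:ℝ) * tp k) = (-1)^k := by
    intro k; rw [hntp]
    simpa using Real.cos_nat_mul_pi_sub 0 k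
  have hsink : ∀ k : ℕ, Real.sin ((n:ℝ) * tp k) = 0 := by
    intro k; rw [hntp]; exact Real.sin_nat_mul_pi k
  have hRtp : ∀ k : ℕ, R (tp k) = (-1)^k * M - T (tp k) := by
    intro k; rw [hRT, hcosk k]; ring
  have hR0 : R (tp 0) = 0 := by
    rw [hRtp]; simp [htp0, hT0]
  have hπ2n_pos : 0 < π / (2*n) := by positivity
  have hπ2n_lt : ∀ j : ℕ, 1 ≤ j → π / (2*n) < tp j := by
    intro j hj
    have h1 : π / (2*n) < π / n := by
      rw [div_lt_div_iff₀ (by positivity) hnR]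
      nlinarith
    have h2 : tp 1 ≤ tp j := htp_le hj
    have h3 : tp 1 = π / n := by simp [htp]
    linarith [h2, h3 ▸ h2]
  have hπ2n_lt2π : π / (2*n) < 2*π := by
    have := hπ2n_lt (2*n) (by omega)
    rw [htp2n] at this; exact this
  have hx0R : R (π/(2*n)) = 0 := by
    rw [hRT, hTz]
    have : (n:ℝ) * (π/(2*n)) = π/2 := by field_simp
    rw [this, Real.cos_pi_div_two]; ring
  -- extremum derivative vanishing
  have hder0 : ∀ t : ℝ, (T t = M ∨ T t = -M) → dT t = 0 := by
    intro t ht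
    have hd : deriv T t = 0 := by
      rcases ht with h | h
      · have hloc : IsLocalMax T t :=
          Filter.Eventually.of_forall (fun x => by rw [h]; exact (abs_le.mp (hmax x)).2)
        exact hloc.deriv_eq_zero
      · have hloc : IsLocalMin T t :=
          Filter.Eventually.of_forall (fun x => by rw [h]; exact (abs_le.mp (hmax x)).1)
        exact hloc.deriv_eq_zero
    rw [← (hdT t).deriv]; exact hd
  have hdR0 : ∀ k : ℕ, R (tp k) = 0 → dR (tp k) = 0 := by
    intro k hk0
    have hTt : T (tp k) = (-1)^k * M := by
      have := hRtp k; rw [hk0] at this; linarith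
    have hTpm : T (tp k) = M ∨ T (tp k) = -M := by
      rcases Nat.even_or_odd k with he | ho
      · left; rw [hTt, he.neg_one_pow]; ring
      · right; rw [hTt, ho.neg_one_pow]; ring
    have hdT0 : dT (tp k) = 0 := hder0 _ hTpm
    have hC : HasDerivAt (fun x => M * Real.cos ((n:ℝ)*x))
        (-Real.sin ((n:ℝ)*(tp k)) * n * M) (tp k) := by
      simpa [mul_comm, mul_assoc, mul_left_comm] using (hasDerivAt_cos_mul (n:ℝ) (tp k)).const_mul M
    have h2 : HasDerivAt R (-Real.sin ((n:ℝ)*(tp k)) * n * M - dT (tp k)) (tp k) := by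
      rw [hRfun]; exact hC.sub (hdT (tp k))
    have huq := (hdR (tp k)).unique h2
    rw [huq, hsink k, hdT0]; ring
  -- sign facts
  have hsignE : ∀ k : ℕ, Even k → 0 ≤ R (tp k) := by
    intro k he
    rw [hRtp, he.neg_one_pow]
    have := (abs_le.mp (hmax (tp k))).2; linarith
  have hsignO : ∀ k : ℕ, Odd k → R (tp k) ≤ 0 := by
    intro k ho
    rw [hRtp, ho.neg_one_pow]
    have := (abs_le.mp (hmax (tp k))).1; linarith
  -- the polynomial
  set Q : Polynomial ℂ := trigQ n A B with hQdef
  have hQe : ∀ x : ℝ, Q.eval (Complex.exp (x * Complex.I))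
      = Complex.exp ((n:ℂ) * x * Complex.I) * ((R x : ℝ) : ℂ) := by
    intro x
    rw [hQdef, trigQ_eval]
  suffices hQ0 : Q = 0 by
    intro x
    have h0 := hQe x
    rw [hQ0, Polynomial.eval_zero] at h0
    have hexp : Complex.exp ((n:ℂ) * x * Complex.I) ≠ 0 := Complex.exp_ne_zero _
    have : ((R x : ℝ) : ℂ) = 0 := by
      rcases mul_eq_zero.mp h0.symm with h | h
      · exact absurd h hexp
      · exact h
    have hRx : R x = 0 := by exact_mod_cast this
    have := hRT x
    linarith
  by_contra hQne
  -- multiplicity lemmas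
  have hroot1 : ∀ t : ℝ, R t = 0 → 1 ≤ Polynomial.rootMultiplicity (Complex.exp (t * Complex.I)) Q := by
    intro t ht
    have hr : Q.IsRoot (Complex.exp (t * Complex.I)) := by
      rw [Polynomial.IsRoot, hQe t, ht]; simp
    exact (Polynomial.rootMultiplicity_pos hQne).mpr hr
  have hroot2 : ∀ t : ℝ, R t = 0 → dR t = 0 →
      2 ≤ Polynomial.rootMultiplicity (Complex.exp (t * Complex.I)) Q := by
    intro t ht hdt
    have hr : Q.IsRoot (Complex.exp (t * Complex.I)) := by
      rw [Polynomial.IsRoot, hQe t, ht]; simp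
    -- derivative of composed function
    have hin : HasDerivAt (fun z : ℂ => Complex.exp (z * Complex.I))
        (Complex.exp ((t:ℂ) * Complex.I) * Complex.I) (t:ℂ) := by
      simpa using ((hasDerivAt_id ((t:ℂ))).mul_const Complex.I).cexp
    have h1 : HasDerivAt (fun z : ℂ => Q.eval (Complex.exp (z * Complex.I)))
        (Q.derivative.eval (Complex.exp ((t:ℂ) * Complex.I)) *
          (Complex.exp ((t:ℂ) * Complex.I) * Complex.I)) (t:ℂ) :=
      by have := (Polynomial.hasDerivAt Q (Complex.exp ((t:ℂ) * Complex.I))).comp (t:ℂ) hin; exact this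
    have hG : HasDerivAt (fun x : ℝ => Q.eval (Complex.exp ((x:ℝ) * Complex.I)))
        (Q.derivative.eval (Complex.exp ((t:ℂ) * Complex.I)) *
          (Complex.exp ((t:ℂ) * Complex.I) * Complex.I)) t := h1.comp_ofReal
    have hn1 : HasDerivAt (fun z : ℂ => Complex.exp ((n:ℂ) * z * Complex.I))
        (Complex.exp ((n:ℂ) * t * Complex.I) * ((n:ℂ) * Complex.I)) (t:ℂ) := by
      have := (((hasDerivAt_id ((t:ℂ))).const_mul ((n:ℂ))).mul_const Complex.I).cexp
      simpa [mul_comm, mul_assoc, mul_left_comm] using this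
    have hn2 : HasDerivAt (fun x : ℝ => Complex.exp ((n:ℂ) * x * Complex.I))
        (Complex.exp ((n:ℂ) * t * Complex.I) * ((n:ℂ) * Complex.I)) t := hn1.comp_ofReal
    have h2 : HasDerivAt (fun x : ℝ => ((R x : ℝ) : ℂ)) ((dR t : ℝ) : ℂ) t := (hdR t).ofReal_comp
    have hH : HasDerivAt (fun x : ℝ => Complex.exp ((n:ℂ) * x * Complex.I) * ((R x : ℝ) : ℂ))
        (Complex.exp ((n:ℂ) * t * Complex.I) * ((n:ℂ) * Complex.I) * ((R t : ℝ) : ℂ)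
          + Complex.exp ((n:ℂ) * t * Complex.I) * ((dR t : ℝ) : ℂ)) t := hn2.mul h2
    have hfun : (fun x : ℝ => Q.eval (Complex.exp ((x:ℝ) * Complex.I)))
        = fun x : ℝ => Complex.exp ((n:ℂ) * x * Complex.I) * ((R x : ℝ) : ℂ) := funext hQe
    rw [hfun] at hG
    have huniq := hG.unique hH
    rw [ht, hdt] at huniq
    simp only [Complex.ofReal_zero, mul_zero, add_zero, zero_add] at huniq
    have hd' : Q.derivative.eval (Complex.exp ((t:ℂ) * Complex.I)) = 0 := by
      rcases mul_eq_zero.mp huniq with h | h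
      · exact h
      · exfalso
        rcases mul_eq_zero.mp h with h' | h'
        · exact Complex.exp_ne_zero _ h'
        · exact Complex.I_ne_zero h'
    have hm := Polynomial.derivative_rootMultiplicity_of_root hr
    have h1le := (Polynomial.rootMultiplicity_pos hQne).mpr hr
    by_contra hlt
    have hm1 : Polynomial.rootMultiplicity (Complex.exp ((t:ℝ) * Complex.I)) Q = 1 := by omega
    have hQ'ne : Q.derivative ≠ 0 := by
      intro h0
      have hc := Polynomial.eq_C_of_natDegree_eq_zero
        (Polynomial.natDegree_eq_zero_of_derivative_eq_zero h0)
      rw [Polynomial.IsRoot, hc, Polynomial.eval_C] at hr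
      rw [hc, hr] at hQne
      simp at hQne
    have hpos : 0 < Polynomial.rootMultiplicity (Complex.exp ((t:ℝ) * Complex.I)) Q.derivative :=
      (Polynomial.rootMultiplicity_pos hQ'ne).mpr hd'
    rw [hm, hm1] at hpos
    simp at hpos
  -- existence of roots per interval
  have hPk : ∀ k : ℕ, ∃ pm : ℝ × ℕ, k < 2*n →
      (tp k ≤ pm.1 ∧ pm.1 < tp (k+1)) ∧ pm.1 ≠ π/(2*n) ∧
      pm.2 ≤ Polynomial.rootMultiplicity (Complex.exp (pm.1 * Complex.I)) Q ∧
      (R (tp k) = 0 → pm.2 = 2) ∧ (pm.2 = 0 → R (tp (k+1)) = 0) := by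
    intro k
    by_cases hk : k < 2*n
    swap
    · exact ⟨(0,0), fun h => absurd h hk⟩
    have hkk1 : tp k < tp (k+1) := htp_mono (lt_add_one k)
    have hpne : tp k ≠ π/(2*n) := by
      rcases Nat.eq_zero_or_pos k with rfl | hk1
      · rw [htp0]; exact ne_of_lt hπ2n_pos
      · exact ne_of_gt (hπ2n_lt k hk1)
    by_cases h1 : R (tp k) = 0
    · refine ⟨(tp k, 2), fun _ => ⟨⟨le_refl _, hkk1⟩, hpne, ?_, fun _ => rfl, by omega⟩⟩
      exact hroot2 (tp k) h1 (hdR0 k h1)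
    by_cases h2 : R (tp (k+1)) = 0
    · exact ⟨(tp k, 0), fun _ => ⟨⟨le_refl _, hkk1⟩, hpne, Nat.zero_le _,
        fun h => absurd h h1, fun _ => h2⟩⟩
    have hk0 : 1 ≤ k := by
      rcases Nat.eq_zero_or_pos k with rfl | h
      · exact absurd hR0 h1
      · exact h
    have hζex : ∃ ζ ∈ Set.Ioo (tp k) (tp (k+1)), R ζ = 0 := by
      rcases Nat.even_or_odd k with he | ho
      · have hs1 : 0 < R (tp k) := lt_of_le_of_ne (hsignE k he) (Ne.symm h1)
        have hs2 : R (tp (k+1)) < 0 :=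
          lt_of_le_of_ne (hsignO (k+1) (Even.add_one he)) h2
        have := intermediate_value_Ioo' hkk1.le hRc.continuousOn
          (show (0:ℝ) ∈ Set.Ioo (R (tp (k+1))) (R (tp k)) from ⟨hs2, hs1⟩)
        obtain ⟨ζ, hζmem, hζeq⟩ := this
        exact ⟨ζ, hζmem, hζeq⟩
      · have hs1 : R (tp k) < 0 := lt_of_le_of_ne (hsignO k ho) h1
        have hs2 : 0 < R (tp (k+1)) :=
          lt_of_le_of_ne (hsignE (k+1) (Odd.add_one ho)) (Ne.symm h2)
        have := intermediate_value_Ioo hkk1.le hRc.continuousOn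
          (show (0:ℝ) ∈ Set.Ioo (R (tp k)) (R (tp (k+1))) from ⟨hs1, hs2⟩)
        obtain ⟨ζ, hζmem, hζeq⟩ := this
        exact ⟨ζ, hζmem, hζeq⟩
    obtain ⟨ζ, hζmem, hζeq⟩ := hζex
    refine ⟨(ζ, 1), fun _ => ⟨⟨hζmem.1.le, hζmem.2⟩, ?_, hroot1 ζ hζeq,
      fun h => absurd h h1, by omega⟩⟩
    have : π/(2*n) < ζ := lt_of_le_of_lt (le_of_lt (hπ2n_lt k hk0)) hζmem.1
    exact ne_of_gt this
  choose pm hpm using hPk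
  set p : ℕ → ℝ := fun k => (pm k).1 with hpdef
  set μ : ℕ → ℕ := fun k => (pm k).2 with hμdef
  set m : Multiset ℂ := (∑ k ∈ Finset.range (2*n),
    Multiset.replicate (μ k) (Complex.exp (p k * Complex.I)))
    + {Complex.exp (((π/(2*n) : ℝ) : ℂ) * Complex.I)} with hmdef
  -- bounds for p
  have hpbound : ∀ k, k < 2*n → tp k ≤ p k ∧ p k < tp (k+1) := fun k hk => (hpm k hk).1
  have hp02π : ∀ k, k < 2*n → 0 ≤ p k ∧ p k < 2*π := by
    intro k hk
    constructor
    · exact le_trans (htp_nonneg k) (hpbound k hk).1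
    · calc p k < tp (k+1) := (hpbound k hk).2
        _ ≤ tp (2*n) := htp_le (by omega)
        _ = 2*π := htp2n
  -- card bound
  have hμ0 : μ 0 = 2 := ((hpm 0 (by omega)).2.2.2.1) hR0
  have hchain : ∀ k, k + 1 < 2*n → μ k = 0 → μ (k+1) = 2 := by
    intro k hk h0
    have h2 := (hpm k (by omega)).2.2.2.2 h0
    exact (hpm (k+1) hk).2.2.2.1 h2
  have hsumμ : 2*n ≤ ∑ k ∈ Finset.range (2*n), μ k :=
    chain_sum (2*n) (by omega) μ hμ0 hchain
  have hcardm : 2*n + 1 ≤ Multiset.card m := by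
    rw [hmdef]
    rw [Multiset.card_add, Multiset.card_sum]
    simp only [Multiset.card_replicate, Multiset.card_singleton]
    omega
  -- m ≤ roots
  have hle : m ≤ Q.roots := by
    rw [Multiset.le_iff_count]
    intro z
    rw [Polynomial.count_roots]
    rw [hmdef, Multiset.count_add, Multiset.count_sum']
    simp only [Multiset.count_replicate, Multiset.count_singleton]
    by_cases hz : z = Complex.exp (((π/(2*n) : ℝ) : ℂ) * Complex.I)
    · rw [if_pos hz]
      have hzero : ∀ k ∈ Finset.range (2*n),
          (if Complex.exp ((p k : ℝ) * Complex.I) = z then μ k else 0) = 0 := by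
        intro k hk
        rw [Finset.mem_range] at hk
        split_ifs with h
        · by_contra hne
          have hbd := hp02π k hk
          have heq : p k = π/(2*n) :=
            expI_inj hbd.1 hbd.2 hπ2n_pos.le hπ2n_lt2π (by rw [h, hz])
          exact (hpm k hk).2.1 heq
        · rfl
      rw [Finset.sum_eq_zero hzero]
      have := hroot1 (π/(2*n)) hx0R
      rw [← hz] at this
      omega
    · rw [if_neg hz, add_zero]
      apply sum_ite_single_le
      · intro k hk hμne hwk
        rw [Finset.mem_range] at hk
        have := (hpm k hk).2.2.1
        rw [hwk] at this
        exact this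
      · intro k hk j hj hμk hμj hwkj
        rw [Finset.mem_range] at hk hj
        have hbk := hp02π k hk
        have hbj := hp02π j hj
        have heq : p k = p j := expI_inj hbk.1 hbk.2 hbj.1 hbj.2 hwkj
        by_contra hne
        rcases lt_or_gt_of_ne hne with h | h
        · have : p k < p j := by
            calc p k < tp (k+1) := (hpbound k hk).2
              _ ≤ tp j := htp_le (by omega)
              _ ≤ p j := (hpbound j hj).1
          linarith [this, heq.le, heq.ge]
        · have : p j < p k := by
            calc p j < tp (j+1) := (hpbound j hj).2
              _ ≤ tp k := htp_le (by omega)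
              _ ≤ p k := (hpbound k hk).1
          linarith [this, heq.le, heq.ge]
  have hfinal : Multiset.card m ≤ 2*n := by
    calc Multiset.card m ≤ Multiset.card Q.roots := Multiset.card_le_card hle
      _ ≤ Q.natDegree := Polynomial.card_roots' Q
      _ ≤ 2*n := by rw [hQdef]; exact trigQ_natDegree_le n A B
  omega

-- second-level: handle x₀ sign, assuming T 0 = M
lemma main_lemma2 (n : ℕ) (hn : 1 ≤ n) (a b : ℕ → ℝ) (M : ℝ) (T : ℝ → ℝ)
    (hT : ∀ x, T x = a 0 + ∑ k ∈ Finset.Icc 1 n, (a k * Real.cos (k * x) + b k * Real.sin (k * x)))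
    (hMpos : 0 < M) (hmax : ∀ x, |T x| ≤ M) (hT0 : T 0 = M)
    (x₀ : ℝ) (hx₀ : |x₀| = π / (2 * n)) (hzero : T x₀ = 0) :
    ∀ x, T x = M * Real.cos (n * x) := by
  rcases abs_cases x₀ with ⟨h1, _⟩ | ⟨h1, _⟩
  · have hx0 : x₀ = π/(2*n) := by rw [← hx₀, h1]
    exact main_lemma_s3 n hn a b M T hT hMpos hmax hT0 (hx0 ▸ hzero)
  · -- x₀ = -(π/(2n)); use S x = T (-x)
    have hx0 : x₀ = -(π/(2*n)) := by rw [← hx₀]; linarith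
    set S : ℝ → ℝ := fun x => T (-x) with hS
    have hST : ∀ x, S x = a 0 + ∑ k ∈ Finset.Icc 1 n,
        (a k * Real.cos (k * x) + (-b k) * Real.sin (k * x)) := by
      intro x
      rw [hS]
      simp only
      rw [hT (-x)]
      congr 1
      apply Finset.sum_congr rfl
      intro k _
      rw [show (k:ℝ) * -x = -((k:ℝ)*x) by ring, Real.cos_neg, Real.sin_neg]
      ring
    have hres := main_lemma_s3 n hn a (fun k => -b k) M S hST hMpos
      (fun x => by rw [hS]; exact hmax (-x)) (by rw [hS]; simpa using hT0)
      (by rw [hS]; simp only; rw [← hx0]; exact hzero)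
    intro x
    have := hres (-x)
    rw [hS] at this
    simp only [neg_neg] at this
    rw [this, show (n:ℝ) * -x = -((n:ℝ)*x) by ring, Real.cos_neg]

end TrigPolyAux

/-- If a trigonometric polynomial `T` of degree `n` attains its maximal absolute
value `M = |T 0| > 0` at `0`, and has a zero at some `x₀` with `|x₀| = π/(2n)`, then
`T x = ± M cos (n x)` for all `x`. -/
theorem trig_poly_equality_case
    (n : ℕ) (hn : 1 ≤ n) (a b : ℕ → ℝ) (M : ℝ)
    (T : ℝ → ℝ)
    (hT : ∀ x, T x = a 0 + ∑ k ∈ Finset.Icc 1 n, (a k * Real.cos (k * x) + b k * Real.sin (k * x)))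
    (hM : M = |T 0|) (hMpos : 0 < M)
    (hmax : ∀ x, |T x| ≤ M)
    (x₀ : ℝ) (hx₀ : |x₀| = π / (2 * n)) (hzero : T x₀ = 0) :
    (∀ x, T x = M * Real.cos (n * x)) ∨ (∀ x, T x = -M * Real.cos (n * x)) := by
  rcases abs_cases (T 0) with ⟨h1, _⟩ | ⟨h1, _⟩
  · left
    exact main_lemma2 n hn a b M T hT hMpos hmax (by rw [hM, h1]) x₀ hx₀ hzero
  · right
    have hT' : ∀ x, (-T) x = (-a 0) + ∑ k ∈ Finset.Icc 1 n,
        ((-a k) * Real.cos (k * x) + (-b k) * Real.sin (k * x)) := by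
      intro x
      simp only [Pi.neg_apply, hT x, neg_add, ← Finset.sum_neg_distrib]
      congr 1
      apply Finset.sum_congr rfl
      intros; ring
    have hres := main_lemma2 n hn (fun k => -a k) (fun k => -b k) M (-T) hT' hMpos
      (fun x => by simpa using hmax x) (by simp only [Pi.neg_apply]; rw [hM, h1])
      x₀ hx₀ (by simp [hzero])
    intro x
    have := hres x
    simp only [Pi.neg_apply] at this
    linarith
end

section
/- Let T be a real trigonometric polynomial of degree n with maximal absolute value M = |T(0)| > 0 attained at 0. Then for all x ∈ [-π/n, π/n], T(0) · T(x) ≥ |T(0)| · M cos(nx), i.e., if T(0) = M > 0 then T(x) ≥ M cos(nx) on [-π/n, π/n]. -/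
open Real Finset

lemma tp_ivt_zero {f : ℝ → ℝ} (hf : Continuous f) {u v : ℝ} (huv : u < v)
    (h : f u * f v < 0) : ∃ ξ ∈ Set.Ioo u v, f ξ = 0 := by
  rcases mul_neg_iff.1 h with ⟨hu, hv⟩ | ⟨hu, hv⟩
  · obtain ⟨ξ, hmem, hξ⟩ := intermediate_value_Ioo' huv.le hf.continuousOn ⟨hv, hu⟩
    exact ⟨ξ, hmem, hξ⟩
  · obtain ⟨ξ, hmem, hξ⟩ := intermediate_value_Ioo huv.le hf.continuousOn ⟨hu, hv⟩
    exact ⟨ξ, hmem, hξ⟩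

lemma tp_exists_poly (n : ℕ) (A B : ℕ → ℝ) :
    ∃ P : Polynomial ℂ, P.natDegree ≤ 2 * n ∧
      ∀ x : ℝ, ((A 0 + ∑ k ∈ Finset.Icc 1 n, (A k * Real.cos (k * x) + B k * Real.sin (k * x)) : ℝ) : ℂ)
        = Complex.exp (-(n * x) * Complex.I) * Polynomial.eval (Complex.exp (x * Complex.I)) P := by
  classical
  refine ⟨Polynomial.C (A 0 : ℂ) * Polynomial.X ^ n
    + ∑ k ∈ Finset.Icc 1 n,
      (Polynomial.C (((A k : ℂ) - (B k : ℂ) * Complex.I) / 2) * Polynomial.X ^ (n + k)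
        + Polynomial.C (((A k : ℂ) + (B k : ℂ) * Complex.I) / 2) * Polynomial.X ^ (n - k)), ?_, ?_⟩
  · refine le_trans (Polynomial.natDegree_add_le _ _) ?_
    refine max_le (le_trans (Polynomial.natDegree_C_mul_le _ _) ?_) ?_
    · simpa using Nat.le_mul_of_pos_left n (by norm_num)
    · refine Polynomial.natDegree_sum_le_of_forall_le _ _ ?_
      intro k hk
      simp only [Finset.mem_Icc] at hk
      refine le_trans (Polynomial.natDegree_add_le _ _) (max_le ?_ ?_)
      · refine le_trans (Polynomial.natDegree_C_mul_le _ _) ?_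
        simpa [Polynomial.natDegree_X_pow] using by omega
      · refine le_trans (Polynomial.natDegree_C_mul_le _ _) ?_
        simpa [Polynomial.natDegree_X_pow] using by omega
  · intro x
    have hz : Complex.exp (x * Complex.I) ≠ 0 := Complex.exp_ne_zero _
    simp only [Polynomial.eval_add, Polynomial.eval_mul, Polynomial.eval_pow,
      Polynomial.eval_C, Polynomial.eval_X, Polynomial.eval_finset_sum, mul_add,
      Finset.mul_sum]
    simp only [← Complex.exp_nat_mul]
    push_cast
    congr 1
    · have e1 : Complex.exp (-(↑n * ↑x) * Complex.I) * Complex.exp ((n : ℂ) * (↑x * Complex.I)) = 1 := by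
        rw [← Complex.exp_add, show -(↑n * ↑x) * Complex.I + (n : ℂ) * (↑x * Complex.I) = 0 by ring,
          Complex.exp_zero]
      linear_combination (-(A 0 : ℂ)) * e1
    · refine Finset.sum_congr rfl ?_
      intro k hk
      simp only [Finset.mem_Icc] at hk
      have hcast : ((n - k : ℕ) : ℂ) = (n : ℂ) - k := by
        push_cast [Nat.cast_sub hk.2]; ring
      have h1 : Complex.exp (-(↑n * ↑x) * Complex.I) * Complex.exp (((n : ℂ) + k) * (↑x * Complex.I))
          = Complex.exp ((k : ℂ) * ↑x * Complex.I) := by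
        rw [← Complex.exp_add]; congr 1; ring
      have h2 : Complex.exp (-(↑n * ↑x) * Complex.I) * Complex.exp (((n - k : ℕ) : ℂ) * (↑x * Complex.I))
          = Complex.exp (-((k : ℂ) * ↑x * Complex.I)) := by
        rw [← Complex.exp_add, hcast]; congr 1; ring
      have hc : Complex.exp (-(↑k * ↑x) * Complex.I) = Complex.exp (-((k : ℂ) * ↑x * Complex.I)) := by
        congr 1; ring
      rw [Complex.cos, Complex.sin, hc]
      linear_combination (-(((A k : ℂ) - (B k : ℂ) * Complex.I) / 2)) * h1
        - (((A k : ℂ) + (B k : ℂ) * Complex.I) / 2) * h2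

lemma tp_deriv_transfer (n : ℕ) (P : Polynomial ℂ) (G : ℝ → ℝ) (d y : ℝ)
    (hid : ∀ x : ℝ, (G x : ℂ)
      = Complex.exp (-(n * x) * Complex.I) * Polynomial.eval (Complex.exp (x * Complex.I)) P)
    (hG : HasDerivAt G d y) :
    (d : ℂ) = Complex.exp (-(n * y) * Complex.I) *
      (-(n : ℂ) * Complex.I * Polynomial.eval (Complex.exp (y * Complex.I)) P
        + Complex.I * Complex.exp (y * Complex.I)
          * Polynomial.eval (Complex.exp (y * Complex.I)) P.derivative) := by
  have h1 : HasDerivAt (fun z : ℂ => Complex.exp (-(n * z) * Complex.I))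
      (Complex.exp (-(n * (y:ℂ)) * Complex.I) * (-(n:ℂ) * Complex.I)) (y : ℂ) := by
    simpa using (((hasDerivAt_id (y:ℂ)).const_mul (n:ℂ)).neg.mul_const Complex.I).cexp
  have h2 : HasDerivAt (fun z : ℂ => Polynomial.eval (Complex.exp (z * Complex.I)) P)
      (Polynomial.eval (Complex.exp ((y:ℂ) * Complex.I)) P.derivative
        * (Complex.exp ((y:ℂ) * Complex.I) * Complex.I)) (y : ℂ) := by
    have := (Polynomial.hasDerivAt P (Complex.exp ((y:ℂ) * Complex.I))).comp (y:ℂ)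
      (((hasDerivAt_id (y:ℂ)).mul_const Complex.I).cexp)
    simpa [Function.comp_def] using this
  have hφ := (h1.mul h2).comp_ofReal
  have hGc : HasDerivAt (fun x : ℝ => (G x : ℂ)) (d : ℂ) y := hG.ofReal_comp
  have heq : (fun x : ℝ => (G x : ℂ))
      = fun x : ℝ => Complex.exp (-(n * (x:ℂ)) * Complex.I)
        * Polynomial.eval (Complex.exp ((x:ℂ) * Complex.I)) P := by
    funext x
    simpa using hid x
  rw [heq] at hGc
  have := hGc.unique hφ
  rw [this]
  push_cast
  ring

lemma tp_double_root {P : Polynomial ℂ} (hP : P ≠ 0) (hr : P.eval 1 = 0)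
    (hr' : P.derivative.eval 1 = 0) : 2 ≤ P.rootMultiplicity 1 := by
  rw [Polynomial.le_rootMultiplicity_iff hP]
  obtain ⟨Q, hQ⟩ := Polynomial.dvd_iff_isRoot.2 hr
  have hd : P.derivative = Q + (Polynomial.X - Polynomial.C 1) * Q.derivative := by
    rw [hQ, Polynomial.derivative_mul]
    simp [Polynomial.derivative_sub]
  have hQ1 : Q.eval 1 = 0 := by
    have := hr'
    rw [hd] at this
    simpa using this
  obtain ⟨R, hR⟩ := Polynomial.dvd_iff_isRoot.2 hQ1
  exact ⟨R, by rw [hQ, hR]; ring⟩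

lemma tp_exp_inj {s t : ℝ} (hs : 0 < s) (hs2 : s < 2 * π) (ht : 0 < t) (ht2 : t < 2 * π)
    (h : Complex.exp (s * Complex.I) = Complex.exp (t * Complex.I)) : s = t := by
  rw [Complex.exp_eq_exp_iff_exists_int] at h
  obtain ⟨m, hm⟩ := h
  have him := congrArg Complex.im hm
  simp [Complex.add_im, Complex.mul_im] at him
  -- him : s = t + m * (2 * π)  (roughly)
  have hm0 : m = 0 := by
    have h1 : (m : ℝ) < 1 := by nlinarith [Real.pi_pos]
    have h2 : (-1 : ℝ) < m := by nlinarith [Real.pi_pos]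
    exact_mod_cast by
      have : (m : ℤ) < 1 := by exact_mod_cast h1
      have : (-1 : ℤ) < m := by exact_mod_cast h2
      omega
  rw [hm0] at him
  simpa using him

lemma tp_exp_ne_one {s : ℝ} (hs : 0 < s) (hs2 : s < 2 * π) :
    Complex.exp (s * Complex.I) ≠ 1 := by
  intro h
  rw [Complex.exp_eq_one_iff] at h
  obtain ⟨m, hm⟩ := h
  have him := congrArg Complex.im hm
  simp [Complex.mul_im] at him
  have h1 : (m : ℝ) < 1 := by nlinarith [Real.pi_pos]
  have h2 : (0 : ℝ) < m := by nlinarith [Real.pi_pos]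
  have : (0 : ℤ) < m := by exact_mod_cast h2
  have : (m : ℤ) < 1 := by exact_mod_cast h1
  omega

lemma tp_cos_lt_one {θ : ℝ} (h1 : 0 < θ) (h2 : θ < 2 * π) : Real.cos θ < 1 := by
  rcases lt_or_eq_of_le (Real.cos_le_one θ) with h | h
  · exact h
  · exfalso
    have := (Real.cos_eq_one_iff_of_lt_of_lt (by linarith [Real.pi_pos]) h2).1 h
    linarith

lemma tp_cos_nat_pi (j : ℕ) : Real.cos (j * π) = (-1 : ℝ) ^ j := by
  simpa using Real.cos_nat_mul_pi_sub 0 j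

lemma tp_form (n : ℕ) (hn : 1 ≤ n) (M ε : ℝ) (a b : ℕ → ℝ) (x : ℝ) :
    M * Real.cos (n * x)
        - (a 0 + ∑ k ∈ Finset.Icc 1 n, (a k * Real.cos (k * x) + b k * Real.sin (k * x)))
        + ε * (Real.cos (n * x) - Real.cos ((n - 1 : ℕ) * x))
      = ((if 0 = n then M + ε else 0) - (if 0 = n - 1 then ε else 0) - a 0)
        + ∑ k ∈ Finset.Icc 1 n,
            (((if k = n then M + ε else 0) - (if k = n - 1 then ε else 0) - a k) * Real.cos (k * x)
              + (-(b k)) * Real.sin (k * x)) := by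
  have hsum : ∑ k ∈ Finset.Icc 1 n,
        (((if k = n then M + ε else 0) - (if k = n - 1 then ε else 0) - a k) * Real.cos (k * x)
          + (-(b k)) * Real.sin (k * x))
      = (∑ k ∈ Finset.Icc 1 n, (if k = n then (M + ε) * Real.cos (k * x) else 0))
        - (∑ k ∈ Finset.Icc 1 n, (if k = n - 1 then ε * Real.cos (k * x) else 0))
        - ∑ k ∈ Finset.Icc 1 n, (a k * Real.cos (k * x) + b k * Real.sin (k * x)) := by
    rw [← Finset.sum_sub_distrib, ← Finset.sum_sub_distrib]
    refine Finset.sum_congr rfl fun k hk => ?_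
    split_ifs <;> ring
  rw [hsum, Finset.sum_ite_eq' (Finset.Icc 1 n) n (fun k => (M + ε) * Real.cos (k * x)),
    Finset.sum_ite_eq' (Finset.Icc 1 n) (n - 1) (fun k => ε * Real.cos (k * x))]
  rcases eq_or_lt_of_le hn with h | h
  · subst h
    norm_num
    ring
  · have h2 : 2 ≤ n := h
    have hmem : n ∈ Finset.Icc 1 n := by simp [hn]
    have hmem2 : n - 1 ∈ Finset.Icc 1 n := by simp [Finset.mem_Icc]; omega
    have h0n : ¬(0 = n) := by omega
    have h0n1 : ¬(0 = n - 1) := by omega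
    rw [if_pos hmem, if_pos hmem2, if_neg h0n, if_neg h0n1]
    ring

set_option maxHeartbeats 1000000 in
lemma tp_key (n : ℕ) (hn : 1 ≤ n) (a b : ℕ → ℝ) (M : ℝ) (T : ℝ → ℝ)
    (hT : ∀ x, T x = a 0 + ∑ k ∈ Finset.Icc 1 n, (a k * Real.cos (k * x) + b k * Real.sin (k * x)))
    (hT0 : T 0 = M) (hMpos : 0 < M) (hmax : ∀ x, |T x| ≤ M) :
    ∀ x ∈ Set.Ioo (0 : ℝ) (π / n), M * Real.cos (n * x) ≤ T x := by
  classical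
  intro x0 hx0
  by_contra hcon
  push_neg at hcon
  obtain ⟨hx0l, hx0r⟩ := hx0
  have hnR : (0:ℝ) < n := by exact_mod_cast hn
  have hπ := Real.pi_pos
  set g₀ : ℝ := M * Real.cos (n * x0) - T x0 with hg₀
  have hg₀pos : 0 < g₀ := by simp only [hg₀]; linarith
  set v0 : ℝ := Real.cos (n * x0) - Real.cos ((n - 1 : ℕ) * x0) with hv0
  have habs : (0:ℝ) ≤ |v0| := abs_nonneg _
  set ε : ℝ := g₀ / (2 * (|v0| + 1)) with hε
  have hεpos : 0 < ε := by apply div_pos hg₀pos; nlinarith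
  have hεv : ε * |v0| < g₀ := by
    rw [hε, div_mul_eq_mul_div, div_lt_iff₀ (by nlinarith)]
    nlinarith
  set G : ℝ → ℝ := fun x =>
    M * Real.cos (n * x) - T x + ε * (Real.cos (n * x) - Real.cos ((n - 1 : ℕ) * x)) with hG
  obtain ⟨P, hPdeg, hPid⟩ := tp_exists_poly n
    (fun k => (if k = n then M + ε else 0) - (if k = n - 1 then ε else 0) - a k) (fun k => -(b k))
  have hGreal : ∀ x : ℝ, G x
      = ((if 0 = n then M + ε else 0) - (if 0 = n - 1 then ε else 0) - a 0)
        + ∑ k ∈ Finset.Icc 1 n,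
            (((if k = n then M + ε else 0) - (if k = n - 1 then ε else 0) - a k) * Real.cos (k * x)
              + (-(b k)) * Real.sin (k * x)) := by
    intro x
    show M * Real.cos (n * x) - T x + ε * (Real.cos (n * x) - Real.cos ((n - 1 : ℕ) * x)) = _
    rw [hT x]
    exact tp_form n hn M ε a b x
  have hGid : ∀ x : ℝ, (G x : ℂ)
      = Complex.exp (-(n * x) * Complex.I) * Polynomial.eval (Complex.exp (x * Complex.I)) P := by
    intro x
    rw [← hPid x]
    exact_mod_cast congrArg (fun r : ℝ => (r : ℂ)) (hGreal x)
  -- continuity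
  have hTc : Continuous T := by
    rw [funext hT]
    fun_prop
  have hGcont : Continuous G := by
    rw [hG]
    fun_prop
  -- the points y j
  set y : ℕ → ℝ := fun j => j * π / n with hy
  have hymono : ∀ i j : ℕ, i ≤ j → y i ≤ y j := by
    intro i j h
    simp only [hy]
    have : (i:ℝ) ≤ j := by exact_mod_cast h
    rw [div_le_div_iff₀ hnR hnR]
    gcongr
  have hystrict : ∀ i j : ℕ, i < j → y i < y j := by
    intro i j h
    simp only [hy]
    have : (i:ℝ) < j := by exact_mod_cast h
    rw [div_lt_div_iff₀ hnR hnR]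
    have h2 : (i:ℝ) * π < j * π := by nlinarith
    nlinarith
  have hy0 : y 0 = 0 := by simp [hy]
  have hy1 : y 1 = π / n := by simp [hy]
  have hy2π : ∀ j : ℕ, j ≤ 2*n - 1 → y j < 2 * π := by
    intro j hj
    have hjR : (j:ℝ) ≤ 2*(n:ℝ) - 1 := by
      have h1 : (j:ℝ) ≤ ((2*n-1:ℕ):ℝ) := by exact_mod_cast hj
      have h2 : ((2*n-1:ℕ):ℝ) = 2*(n:ℝ) - 1 := by
        push_cast [Nat.cast_sub (by omega : 1 ≤ 2*n)]
        ring
      linarith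
    simp only [hy]
    rw [div_lt_iff₀ hnR]
    nlinarith
  have hsign : ∀ j : ℕ, 1 ≤ j → j ≤ 2*n-1 → 0 < (-1:ℝ)^j * G (y j) := by
    intro j hj1 hj2
    have hyjpos : 0 < y j := by
      have := hystrict 0 j hj1
      rwa [hy0] at this
    have hyj2π : y j < 2*π := hy2π j hj2
    have hny : (n:ℝ) * y j = j * π := by simp only [hy]; field_simp
    have hn1y : ((n-1:ℕ):ℝ) * y j = j * π - y j := by
      have hc : ((n-1:ℕ):ℝ) = (n:ℝ) - 1 := by
        push_cast [Nat.cast_sub hn]; ring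
      rw [hc]; simp only [hy]; field_simp
    have hGyj : G (y j) = M * (-1:ℝ)^j - T (y j)
        + ε * ((-1:ℝ)^j - (-1:ℝ)^j * Real.cos (y j)) := by
      simp only [hG]
      rw [hny, hn1y, tp_cos_nat_pi, Real.cos_nat_mul_pi_sub]
    have hTb := abs_le.1 (hmax (y j))
    have hcosb : Real.cos (y j) < 1 := tp_cos_lt_one hyjpos hyj2π
    rcases neg_one_pow_eq_or ℝ j with h | h <;> rw [h] at hGyj ⊢ <;> nlinarith [hTb.1, hTb.2]
  have hGx0 : 0 < G x0 := by
    have hval : G x0 = g₀ + ε * v0 := by simp only [hG, hg₀, hv0]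
    have h4 := mul_le_mul_of_nonneg_left (neg_abs_le v0) hεpos.le
    have h5 : ε * -|v0| = -(ε * |v0|) := by ring
    linarith
  have hQ' : ∀ j : ℕ, ∃ ξ : ℝ, j < 2*n - 1 → (ξ ∈ Set.Ioo (y j) (y (j+1)) ∧ G ξ = 0) := by
    intro j
    by_cases hj : j < 2*n - 1
    swap
    · exact ⟨0, fun hc => absurd hc hj⟩
    rcases Nat.eq_zero_or_pos j with rfl | hj1
    · have h1 := hsign 1 le_rfl (by omega)
      have hGy1 : G (y 1) < 0 := by rw [pow_one] at h1; linarith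
      obtain ⟨ξ, hmem, hz⟩ := tp_ivt_zero hGcont (show x0 < y 1 by rw [hy1]; exact hx0r)
        (mul_neg_of_pos_of_neg hGx0 hGy1)
      exact ⟨ξ, fun _ => ⟨⟨by rw [hy0]; linarith [hmem.1], hmem.2⟩, hz⟩⟩
    · have hs1 := hsign j hj1 (by omega)
      have hs2 := hsign (j+1) (by omega) (by omega)
      rw [pow_succ] at hs2
      have hprod : G (y j) * G (y (j+1)) < 0 := by
        rcases neg_one_pow_eq_or ℝ j with h | h <;> rw [h] at hs1 hs2 <;> nlinarith
      obtain ⟨ξ, hmem, hz⟩ := tp_ivt_zero hGcont (hystrict j (j+1) (by omega)) hprod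
      exact ⟨ξ, fun _ => ⟨hmem, hz⟩⟩
  choose ξ hξ using hQ'
  have hξmem : ∀ j, j < 2*n-1 → ξ j ∈ Set.Ioo (y j) (y (j+1)) := fun j hj => (hξ j hj).1
  have hξpos : ∀ j, j < 2*n-1 → 0 < ξ j := by
    intro j hj
    have h1 := (hξmem j hj).1
    have h0 : y 0 ≤ y j := hymono 0 j (Nat.zero_le _)
    rw [hy0] at h0; linarith
  have hξlt : ∀ j, j < 2*n-1 → ξ j < 2*π := by
    intro j hj
    have h1 := (hξmem j hj).2
    have h2 : y (j+1) < 2*π := hy2π (j+1) (by omega)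
    linarith
  have hroot : ∀ j, j < 2*n-1 → Polynomial.eval (Complex.exp (ξ j * Complex.I)) P = 0 := by
    intro j hj
    have h := hGid (ξ j)
    rw [(hξ j hj).2] at h
    simp only [Complex.ofReal_zero] at h
    rcases mul_eq_zero.1 h.symm with h' | h'
    · exact absurd h' (Complex.exp_ne_zero _)
    · exact h'
  have hG0 : G 0 = 0 := by simp only [hG]; norm_num [hT0]
  have hP1 : Polynomial.eval 1 P = 0 := by
    have h := hGid 0
    rw [hG0] at h
    simp at h
    exact h.symm
  have hTdiff : DifferentiableAt ℝ T 0 := by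
    rw [funext hT]
    fun_prop
  have hloc : IsLocalMax T 0 :=
    Filter.Eventually.of_forall fun x => by rw [hT0]; exact le_trans (le_abs_self _) (hmax x)
  have hT'0 : HasDerivAt T 0 0 := by
    have h := hTdiff.hasDerivAt
    rwa [hloc.deriv_eq_zero] at h
  have hcosd : ∀ c : ℝ, HasDerivAt (fun x : ℝ => Real.cos (c * x)) 0 0 := by
    intro c
    have h := (Real.hasDerivAt_cos (c * 0)).comp 0 ((hasDerivAt_id 0).const_mul c)
    simpa [Function.comp_def] using h
  have hGd : HasDerivAt G 0 0 := by
    rw [hG]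
    have h := (((hcosd n).const_mul M).sub hT'0).add
      (((hcosd n).sub (hcosd ((n-1:ℕ):ℝ))).const_mul ε)
    simpa [Pi.add_def, Pi.sub_def] using h
  have hP1' : Polynomial.eval 1 P.derivative = 0 := by
    have hd := tp_deriv_transfer n P G 0 0 hGid hGd
    simp [hP1] at hd
    exact hd
  have hPne : P ≠ 0 := by
    intro h0
    have h1 := hsign 1 le_rfl (by omega)
    have h2 := hGid (y 1)
    rw [h0] at h2
    simp at h2
    rw [pow_one, h2] at h1
    linarith
  set Z : Multiset ℂ := (Multiset.range (2*n-1)).map (fun j => Complex.exp (ξ j * Complex.I)) with hZ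
  have hnodup : Z.Nodup := by
    rw [hZ]
    refine Multiset.Nodup.map_on ?_ (Multiset.nodup_range _)
    intro i hi j hj hij
    rw [Multiset.mem_range] at hi hj
    have hxi := tp_exp_inj (hξpos i hi) (hξlt i hi) (hξpos j hj) (hξlt j hj) hij
    rcases lt_trichotomy i j with h | h | h
    · exfalso
      have h1 := (hξmem i hi).2
      have h2 := (hξmem j hj).1
      have h3 := hymono (i+1) j (by omega)
      linarith
    · exact h
    · exfalso
      have h1 := (hξmem j hj).2
      have h2 := (hξmem i hi).1
      have h3 := hymono (j+1) i (by omega)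
      linarith
  have hone : (1:ℂ) ∉ Z := by
    rw [hZ]
    intro hmem
    rw [Multiset.mem_map] at hmem
    obtain ⟨j, hj, hj2⟩ := hmem
    rw [Multiset.mem_range] at hj
    exact tp_exp_ne_one (hξpos j hj) (hξlt j hj) hj2
  have hle : Multiset.replicate 2 (1:ℂ) + Z ≤ P.roots := by
    rw [Multiset.le_iff_count]
    intro z
    rw [Multiset.count_add, Polynomial.count_roots]
    by_cases hz1 : z = 1
    · subst hz1
      rw [Multiset.count_replicate_self, Multiset.count_eq_zero_of_notMem hone]
      have h2 := tp_double_root hPne hP1 hP1'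
      unfold Polynomial.IsRoot at *
      omega
    · rw [Multiset.count_replicate, if_neg (fun h => hz1 h.symm)]
      rcases Nat.eq_zero_or_pos (Z.count z) with h0 | hpos
      · rw [h0]
        exact Nat.zero_le _
      · have hmem : z ∈ Z := by rwa [← Multiset.count_pos]
        have hcount : Z.count z ≤ 1 := Multiset.nodup_iff_count_le_one.1 hnodup z
        have hzroot : Polynomial.IsRoot P z := by
          rw [hZ, Multiset.mem_map] at hmem
          obtain ⟨j, hj, rfl⟩ := hmem
          rw [Multiset.mem_range] at hj
          exact hroot j hj
        have hge := (Polynomial.rootMultiplicity_pos hPne).2 hzroot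
        omega
  have hcard := Multiset.card_le_card hle
  rw [Multiset.card_add, Multiset.card_replicate, hZ, Multiset.card_map, Multiset.card_range] at hcard
  have hcard2 := Polynomial.card_roots' P
  omega

/-- If a trigonometric polynomial `T` of degree `n` satisfies `T 0 = M > 0` and
`|T x| ≤ M` for all `x`, then `T x ≥ M cos (n x)` on `[-π/n, π/n]`. -/
theorem trig_poly_cos_lower_bound
    (n : ℕ) (hn : 1 ≤ n) (a b : ℕ → ℝ) (M : ℝ)
    (T : ℝ → ℝ)
    (hT : ∀ x, T x = a 0 + ∑ k ∈ Finset.Icc 1 n, (a k * Real.cos (k * x) + b k * Real.sin (k * x)))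
    (hT0 : T 0 = M) (hMpos : 0 < M)
    (hmax : ∀ x, |T x| ≤ M) :
    ∀ x ∈ Set.Icc (-(π / n)) (π / n), T x ≥ M * Real.cos (n * x) := by
  intro x hx
  obtain ⟨h1, h2⟩ := hx
  have hnR : (0:ℝ) < n := by exact_mod_cast hn
  have hπ := Real.pi_pos
  have hMlow := (abs_le.1 (hmax x)).1
  rcases lt_trichotomy x 0 with hx0 | rfl | hx0
  · rcases eq_or_lt_of_le h1 with heq | hlt
    · have hnx : (n:ℝ) * x = -π := by rw [← heq]; field_simp
      rw [ge_iff_le, hnx, Real.cos_neg, Real.cos_pi]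
      linarith
    · have key := tp_key n hn a (fun k => -(b k)) M (fun t => T (-t)) ?_ ?_ hMpos ?_ (-x)
        ⟨by linarith, by linarith⟩
      · simp only [neg_neg] at key
        rw [show (n:ℝ) * -x = -(n*x) by ring, Real.cos_neg] at key
        exact key
      · intro t
        show T (-t) = _
        rw [hT (-t)]
        refine congrArg (fun s => a 0 + s) (Finset.sum_congr rfl fun k hk => ?_)
        rw [show (k:ℝ) * -t = -(k*t) by ring, Real.cos_neg, Real.sin_neg]
        ring
      · show T (-0) = M
        rw [neg_zero, hT0]
      · intro t; exact hmax (-t)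
  · simp [hT0]
  · rcases eq_or_lt_of_le h2 with heq | hlt
    · have hnx : (n:ℝ) * x = π := by rw [heq]; field_simp
      rw [ge_iff_le, hnx, Real.cos_pi]
      linarith
    · exact tp_key n hn a b M T hT hT0 hMpos hmax x ⟨hx0, hlt⟩
end

section
/- If a homogeneous polynomial P ∈ ℂ[z₁, z₂] of degree n attains its maximal absolute value on the unit sphere S³ ⊂ ℂ² at a point p, then every point q ∈ S³ with P(q) = 0 satisfies arccos|⟨p,q⟩| ≥ arcsin(1/√n), where ⟨·,·⟩ is the Hermitian inner product. -/
open Real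


lemma eval_hom_smul' {σ : Type*} {n : ℕ} {P : MvPolynomial σ ℂ}
    (h : P.IsHomogeneous n) (c : ℂ) (x : σ → ℂ) :
    MvPolynomial.eval (fun i => c * x i) P = c ^ n * MvPolynomial.eval x P := by
  rw [MvPolynomial.eval_eq, MvPolynomial.eval_eq, Finset.mul_sum]
  apply Finset.sum_congr rfl
  intro d hd
  have hdeg : ∑ i ∈ d.support, d i = n := by
    have := h (MvPolynomial.mem_support_iff.mp hd)
    rw [Finsupp.weight_apply] at this
    simpa [Finsupp.sum, mul_comm] using this
  rw [show (∏ i ∈ d.support, (c * x i) ^ d i)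
      = (∏ i ∈ d.support, c ^ d i) * ∏ i ∈ d.support, x i ^ d i by
    rw [← Finset.prod_mul_distrib]; exact Finset.prod_congr rfl fun i _ => mul_pow _ _ _]
  rw [Finset.prod_pow_eq_pow_sum, hdeg]; ring

lemma key_aux' (n : ℕ) (hn : 1 ≤ n) {x : ℝ} (hx : 0 < x) (hx1 : x ≤ 1) :
    (1 + x) ^ n * (1 - n * x) ≤ 1 - x ^ 2 := by
  induction n with
  | zero => omega
  | succ m ih =>
    rcases Nat.eq_zero_or_pos m with rfl | hm
    · push_cast; nlinarith
    · have IH := ih hm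
      have hp : (0:ℝ) ≤ (1+x)^m := by positivity
      have hexp : (1+x)^(m+1) * (1 - (↑(m+1):ℝ)*x) = (1+x)^m * (1 - m*x - (m+1)*x^2) := by
        push_cast; ring
      push_cast at hexp ⊢
      rw [hexp]
      rcases le_or_gt 0 (1 - (m:ℝ)*x - ((m:ℝ)+1)*x^2) with ht | ht
      · have h1 : (1+x)^m * (1 - (m:ℝ)*x - ((m:ℝ)+1)*x^2) ≤ (1+x)^m * (1 - (m:ℝ)*x) := by
          apply mul_le_mul_of_nonneg_left _ hp
          nlinarith
        linarith
      · nlinarith [mul_nonpos_of_nonneg_of_nonpos hp ht.le]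

lemma key_ineq' (n : ℕ) (hn : 1 ≤ n) {x : ℝ} (hx : 0 < x) (hx1 : x ≤ 1) :
    (1 + x) ^ n * (1 - n * x) < 1 := by
  nlinarith [key_aux' n hn hx hx1]

lemma eval_aeval_poly (P : MvPolynomial (Fin 2) ℂ) (g : Fin 2 → ℂ) (h : Fin 2 → ℂ) (w : ℂ) :
    Polynomial.eval w (MvPolynomial.aeval
        (fun i => Polynomial.C (g i) + Polynomial.C (h i) * Polynomial.X) P)
      = MvPolynomial.eval (fun i => g i + h i * w) P := by
  have := MvPolynomial.comp_aeval_apply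
    (f := fun i => Polynomial.C (g i) + Polynomial.C (h i) * Polynomial.X)
    (Polynomial.aeval w (R := ℂ)) P
  simp only [map_add, map_mul, Polynomial.aeval_C, Polynomial.aeval_X,
    Algebra.algebraMap_self, RingHom.id_apply, Polynomial.coe_aeval_eq_eval] at this
  rw [this, MvPolynomial.aeval_eq_eval₂Hom]
  rfl

set_option maxHeartbeats 1000000 in
/-- If a nonzero homogeneous polynomial `P ∈ ℂ[z₁, z₂]` of degree `n ≥ 1` attains
its maximal absolute value on the unit sphere `S³ ⊂ ℂ²` at `p`, then every zero `q ∈ S³` of `P`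
satisfies `arccos |⟨p,q⟩| ≥ arcsin (1/√n)`. -/
theorem complex_sphere_polynomial_zero_avoidance_dim2
    (n : ℕ) (hn : 1 ≤ n) (P : MvPolynomial (Fin 2) ℂ)
    (hhom : P.IsHomogeneous n) (hP : P ≠ 0)
    (p : EuclideanSpace ℂ (Fin 2)) (hp : ‖p‖ = 1)
    (hmax : ∀ x : EuclideanSpace ℂ (Fin 2), ‖x‖ = 1 →
      ‖MvPolynomial.eval (fun i => x i) P‖ ≤
        ‖MvPolynomial.eval (fun i => p i) P‖) :
    ∀ q : EuclideanSpace ℂ (Fin 2), ‖q‖ = 1 → MvPolynomial.eval (fun i => q i) P = 0 →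
      Real.arccos ‖(inner ℂ p q : ℂ)‖ ≥ Real.arcsin (1 / Real.sqrt n) := by
  have hn0 : (0:ℝ) < n := by exact_mod_cast hn
  set M : ℝ := ‖MvPolynomial.eval (fun i => p i) P‖ with hM_def
  have hMnonneg : 0 ≤ M := norm_nonneg _
  -- growth bound
  have hgrow : ∀ x : EuclideanSpace ℂ (Fin 2),
      ‖MvPolynomial.eval (fun i => x i) P‖ ≤ M * ‖x‖ ^ n := by
    intro x
    rcases eq_or_ne x 0 with rfl | hx
    · have h0 : MvPolynomial.eval (fun i => (0 : EuclideanSpace ℂ (Fin 2)) i) P = 0 := by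
        have h1 := eval_hom_smul' hhom 0 (fun _ => (1:ℂ))
        simpa [zero_pow (by omega : n ≠ 0)] using h1
      rw [h0]
      simp [zero_pow (by omega : n ≠ 0)]
    · have ht : 0 < ‖x‖ := norm_pos_iff.mpr hx
      set u : EuclideanSpace ℂ (Fin 2) := ((‖x‖ : ℂ))⁻¹ • x with hu_def
      have hu : ‖u‖ = 1 := norm_smul_inv_norm hx
      have hxu : (fun i => x i) = fun i => (‖x‖ : ℂ) * u i := by
        funext i
        rw [hu_def]
        simp only [PiLp.smul_apply, smul_eq_mul]
        have hne : (‖x‖ : ℂ) ≠ 0 := by exact_mod_cast ht.ne'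
        field_simp
      rw [hxu, eval_hom_smul' hhom]
      rw [norm_mul, norm_pow, Complex.norm_real, norm_norm]
      calc ‖x‖ ^ n * ‖MvPolynomial.eval (fun i => u i) P‖
          ≤ ‖x‖ ^ n * M := by
            exact mul_le_mul_of_nonneg_left (hmax u hu) (by positivity)
        _ = M * ‖x‖ ^ n := by ring
  -- M > 0
  have hM : 0 < M := by
    rcases hMnonneg.eq_or_lt with hM0 | hM0
    · exfalso
      apply hP
      apply MvPolynomial.funext
      intro x
      have h1 := hgrow ((WithLp.equiv 2 (Fin 2 → ℂ)).symm x)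
      rw [← hM0, zero_mul] at h1
      have h2 : MvPolynomial.eval (fun i => ((WithLp.equiv 2 (Fin 2 → ℂ)).symm x) i) P = 0 := by
        have := le_antisymm h1 (norm_nonneg _)
        exact norm_eq_zero.mp this
      simpa using h2
    · exact hM0
  intro q hq hq0
  set c : ℝ := ‖(inner ℂ p q : ℂ)‖ with hc_def
  have hc0 : 0 ≤ c := norm_nonneg _
  -- key inequality
  have hkey : c ^ 2 ≤ 1 - (n:ℝ)⁻¹ := by
    by_contra hlt
    push_neg at hlt
    set α : ℂ := (inner ℂ q p : ℂ) with hα_def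
    have habs : ‖α‖ = c := by
      have h1 : α = (starRingEnd ℂ) (inner ℂ p q : ℂ) := (inner_conj_symm q p).symm
      rw [h1, Complex.norm_conj]
    set v : EuclideanSpace ℂ (Fin 2) := p - α • q with hv_def
    have hqv : (inner ℂ q v : ℂ) = 0 := by
      rw [hv_def, inner_sub_right, inner_smul_right, inner_self_eq_norm_sq_to_K, hq, ← hα_def]
      norm_num
    have hvne : v ≠ 0 := by
      intro h0
      have hpq : (fun i => p i) = fun i => α * q i := by
        funext i
        have : p = α • q := by rwa [sub_eq_zero] at h0
        rw [this]
        simp [PiLp.smul_apply, smul_eq_mul]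
      have : M = 0 := by
        rw [hM_def, hpq, eval_hom_smul' hhom, hq0, mul_zero, norm_zero]
      linarith
    set β : ℝ := ‖v‖ with hβ_def
    have hβpos : 0 < β := norm_pos_iff.mpr hvne
    set q' : EuclideanSpace ℂ (Fin 2) := ((β:ℂ))⁻¹ • v with hq'_def
    have hβne : (β:ℂ) ≠ 0 := by exact_mod_cast hβpos.ne'
    have hβq' : ((β:ℂ)) • q' = v := by
      rw [hq'_def, smul_smul, mul_inv_cancel₀ hβne, one_smul]
    have hq'norm : ‖q'‖ = 1 := by
      rw [hq'_def, norm_smul]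
      simp only [norm_inv, Complex.norm_real, Real.norm_eq_abs, abs_of_pos hβpos]
      rw [← hβ_def]
      field_simp
    have hqq' : (inner ℂ q q' : ℂ) = 0 := by
      rw [hq'_def, inner_smul_right, hqv, mul_zero]
    have hpdecomp : p = α • q + (β:ℂ) • q' := by
      rw [hβq', hv_def]
      abel
    set a : ℝ := ‖α‖^2 with ha_def
    have hnormz : ∀ w : ℂ, ‖α • q + w • q'‖ ^ 2 = a + ‖w‖^2 := by
      intro w
      have h1 : (inner ℂ (α • q) (w • q') : ℂ) = 0 := by
        rw [inner_smul_left, inner_smul_right, hqq']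
        ring
      have h2 := norm_add_sq (𝕜 := ℂ) (α • q) (w • q')
      rw [h1] at h2
      simp only [map_zero, mul_zero, add_zero] at h2
      rw [h2, norm_smul, norm_smul, hq, hq'norm, mul_one, mul_one, ha_def]
    have hβ1 : a + β^2 = 1 := by
      have h1 := hnormz (β:ℂ)
      rw [← hpdecomp, hp] at h1
      rw [Complex.norm_real, Real.norm_eq_abs, abs_of_pos hβpos] at h1
      linarith [h1]
    -- the polynomial F
    set F : Polynomial ℂ := MvPolynomial.aeval
      (fun i => Polynomial.C (α * q i) + Polynomial.C (q' i) * Polynomial.X) P with hF_def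
    have hFeval : ∀ w : ℂ, F.eval w = MvPolynomial.eval (fun i => α * q i + q' i * w) P :=
      fun w => eval_aeval_poly P _ _ w
    have hcoord : ∀ w : ℂ, (fun i => α * q i + q' i * w) = (fun i => (α • q + w • q') i) := by
      intro w; funext i
      simp only [PiLp.add_apply, PiLp.smul_apply, smul_eq_mul]
      ring
    have hF0 : F.eval 0 = 0 := by
      rw [hFeval]
      simp only [mul_zero, add_zero]
      rw [eval_hom_smul' hhom α (fun i => q i), hq0, mul_zero]
    set G := F.divX with hG_def
    have hFG : ∀ w, F.eval w = w * G.eval w := by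
      intro w
      conv_lhs => rw [← Polynomial.X_mul_divX_add F]
      rw [Polynomial.coeff_zero_eq_eval_zero, hF0]
      simp [hG_def]
    -- radius
    set r : ℝ := Real.sqrt ((n:ℝ)⁻¹) with hr_def
    have hrpos : 0 < r := Real.sqrt_pos.mpr (by positivity)
    have hr2 : r^2 = (n:ℝ)⁻¹ := Real.sq_sqrt (by positivity)
    set s : ℝ := Real.sqrt (a + r^2) with hs_def
    have hs0 : 0 ≤ a + r^2 := by positivity
    set Cb : ℝ := M * s^n / r with hCb_def
    have hsphere : ∀ w : ℂ, ‖w‖ = r → ‖G.eval w‖ ≤ Cb := by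
      intro w hw
      have h2 : ‖F.eval w‖ ≤ M * s^n := by
        rw [hFeval, hcoord]
        have h3 := hgrow (α • q + w • q')
        have hnz : ‖α • q + w • q'‖ = s := by
          have h5 : ‖α • q + w • q'‖ ^ 2 = a + r ^ 2 := by rw [hnormz w, hw]
          rw [hs_def, ← h5, Real.sqrt_sq (norm_nonneg _)]
        rwa [hnz] at h3
      rw [hFG, norm_mul, hw] at h2
      rw [hCb_def, le_div_iff₀ hrpos]
      linarith [h2]
    have hβb : β^2 < (n:ℝ)⁻¹ := by
      have : a = c^2 := by rw [ha_def, habs]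
      nlinarith [hβ1, hlt]
    have hβltr : β < r := by
      rw [hr_def]
      exact (Real.lt_sqrt hβpos.le).mpr hβb
    have hclosed : ‖G.eval (β:ℂ)‖ ≤ Cb := by
      have hmem : (β:ℂ) ∈ closure (Metric.ball (0:ℂ) r) := subset_closure (by
        simp only [Metric.mem_ball, Complex.dist_eq, sub_zero, Complex.norm_real, Real.norm_eq_abs,
          abs_of_pos hβpos]
        exact hβltr)
      refine Complex.norm_le_of_forall_mem_frontier_norm_le Metric.isBounded_ball
        ((G.differentiable).diffContOnCl) ?_ hmem
      intro z hz
      rw [frontier_ball (0:ℂ) (ne_of_gt hrpos)] at hz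
      have hz' : ‖z‖ = r := by
        simpa [Complex.dist_eq] using hz
      exact hsphere z hz'
    -- chain
    have hMeqF : M = ‖F.eval (β:ℂ)‖ := by
      rw [hFeval, hcoord, hM_def, ← hpdecomp]
    have hMle : M ≤ β * Cb := by
      rw [hMeqF, hFG, norm_mul, Complex.norm_real, Real.norm_eq_abs, abs_of_pos hβpos]
      exact mul_le_mul_of_nonneg_left hclosed hβpos.le
    have hCbnonneg : 0 ≤ s := Real.sqrt_nonneg _
    have hrle : r ≤ β * s^n := by
      rw [hCb_def] at hMle
      rw [div_eq_mul_inv] at hMle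
      have h4 : M * r ≤ β * (M * s^n) := by
        have := mul_le_mul_of_nonneg_right hMle hrpos.le
        calc M * r ≤ β * (M * s^n * r⁻¹) * r := this
          _ = β * (M * s^n) * (r⁻¹ * r) := by ring
          _ = β * (M * s^n) := by rw [inv_mul_cancel₀ hrpos.ne', mul_one]
      nlinarith [h4, hM]
    have hsq : r^2 ≤ β^2 * (a + r^2)^n := by
      have hsn : (s^n)^2 = (a + r^2)^n := by
        rw [← pow_mul, mul_comm n 2, pow_mul, hs_def, Real.sq_sqrt hs0]
      nlinarith [hrle, hrpos, mul_nonneg hβpos.le (pow_nonneg hCbnonneg n)]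
    -- final contradiction
    set x : ℝ := (n:ℝ)⁻¹ - β^2 with hx_def
    have hxpos : 0 < x := by rw [hx_def]; linarith [hβb]
    have hx1 : x ≤ 1 := by
      have : (n:ℝ)⁻¹ ≤ 1 := by
        rw [inv_le_one_iff₀]
        right; exact_mod_cast hn
      rw [hx_def]
      nlinarith [sq_nonneg β]
    have hax : a + r^2 = 1 + x := by
      rw [hr2, hx_def]; linarith [hβ1]
    have hbx : β^2 = (n:ℝ)⁻¹ * (1 - n * x) := by
      rw [hx_def]
      field_simp
      ring
    have hkey2 := key_ineq' n hn hxpos hx1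
    rw [hax, hbx, hr2] at hsq
    nlinarith [hsq, hkey2, mul_lt_mul_of_pos_left hkey2 (by positivity : (0:ℝ) < (n:ℝ)⁻¹)]
  -- conclude from hkey
  have hc1 : c ≤ 1 := by
    rw [hc_def]
    have := norm_inner_le_norm (𝕜 := ℂ) p q
    rw [hp, hq, one_mul] at this
    simpa using this
  rw [ge_iff_le, Real.arccos_eq_arcsin hc0]
  apply Real.monotone_arcsin
  rw [show (1:ℝ) / Real.sqrt n = Real.sqrt ((n:ℝ)⁻¹) by
    rw [Real.sqrt_inv]; ring]
  apply Real.sqrt_le_sqrt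
  linarith [hkey]
end

section
/- Let P ∈ ℂ[z₁,…,z_d] be a homogeneous polynomial of degree n ≥ 1, not identically zero, attaining its maximal absolute value on the unit sphere S^{2d-1} ⊂ ℂ^d at a point p. Then every q ∈ S^{2d-1} with P(q) = 0 satisfies arccos|⟨p,q⟩| ≥ arcsin(1/√n). -/
open Real

section helpers


lemma homog_eval_smul {d n : ℕ} {P : MvPolynomial (Fin d) ℂ} (h : P.IsHomogeneous n)
    (c : ℂ) (x : Fin d → ℂ) :
    MvPolynomial.eval (fun i => c * x i) P = c ^ n * MvPolynomial.eval x P := by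
  rw [MvPolynomial.eval_eq', MvPolynomial.eval_eq', Finset.mul_sum]
  apply Finset.sum_congr rfl
  intro m hm
  have hdeg : ∑ i, m i = n := by
    have h1 : m.degree = n := by
      by_contra hne
      exact MvPolynomial.mem_support_iff.mp hm (h.coeff_eq_zero hne)
    rw [← h1, Finsupp.degree]
    exact (Finset.sum_subset (Finset.subset_univ _)
      (fun i _ hi => Finsupp.notMem_support_iff.mp hi)).symm
  have hprod : (∏ i, (c * x i) ^ m i) = c ^ n * ∏ i, x i ^ m i := by
    simp_rw [mul_pow]
    rw [Finset.prod_mul_distrib, Finset.prod_pow_eq_pow_sum, hdeg]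
  rw [hprod]; ring

lemma eval_aeval_poly_s9 {d : ℕ} (P : MvPolynomial (Fin d) ℂ) (f : Fin d → Polynomial ℂ) (z : ℂ) :
    Polynomial.eval z (MvPolynomial.aeval f P) =
      MvPolynomial.eval (fun i => Polynomial.eval z (f i)) P := by
  induction P using MvPolynomial.induction_on with
  | C a => simp
  | add p q hp hq => simp [hp, hq]
  | mul_X p i hp => simp [hp]

end helpers

open Polynomial Complex Set in
lemma zero_avoid_core (n : ℕ) (hn : 1 ≤ n) (G : Polynomial ℂ) (M R : ℝ)
    (hM : 0 < M) (hR : 0 < R) (zp : ℂ) (hzp : ‖zp‖ = R)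
    (hbound : ∀ z : ℂ, Complex.normSq (G.eval z) ≤ M^2 * (1 + Complex.normSq z)^n)
    (heq : Complex.normSq (G.eval zp) = M^2 * (1 + R^2)^n)
    (hzero : G.eval 0 = 0) :
    1 + R^2 ≤ n * R^2 := by
  have hRC : (R:ℂ) ≠ 0 := by exact_mod_cast hR.ne'
  set zhat : ℂ := zp / (R:ℂ) with hzhat_def
  have hzpR : (R:ℂ) * zhat = zp := by rw [hzhat_def]; field_simp
  have hzhatsq : Complex.normSq zhat = 1 := by
    rw [hzhat_def, Complex.normSq_div, ← Complex.sq_norm zp, hzp, Complex.normSq_ofReal]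
    field_simp
  -- the function along the ray
  set φ : ℝ → ℂ := fun s => G.eval ((s:ℂ) * zhat) with hφ_def
  set η : ℝ → ℝ := fun s => Complex.normSq (φ s) with hη_def
  have hnsq : ∀ s : ℝ, Complex.normSq ((s:ℂ) * zhat) = s^2 := by
    intro s
    rw [Complex.normSq_mul, hzhatsq, Complex.normSq_ofReal]
    ring
  have hηbound : ∀ s : ℝ, η s ≤ M^2 * (1 + s^2)^n := by
    intro s
    have := hbound ((s:ℂ) * zhat)
    rwa [hnsq s] at this
  have hηR : η R = M^2 * (1 + R^2)^n := by
    simp only [hη_def, hφ_def, hzpR, heq]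
  -- derivative of η at R
  have hφD : ∀ s : ℝ, HasDerivAt φ (zhat • (G.derivative.eval ((s:ℂ) * zhat))) s := by
    intro s
    have hc : HasDerivAt (fun t : ℝ => (t:ℂ) * zhat) zhat s := by
      simpa using (Complex.ofRealCLM.hasDerivAt (x := s)).mul_const zhat
    have hp : HasDerivAt (fun z : ℂ => G.eval z) (G.derivative.eval ((s:ℂ) * zhat)) ((s:ℂ)*zhat) :=
      Polynomial.hasDerivAt G _
    exact hp.scomp s hc
  obtain ⟨E, hE⟩ : ∃ E, HasDerivAt η E R := by
    have h1 : HasDerivAt (fun s : ℝ => (φ s).re) ((zhat • (G.derivative.eval ((R:ℂ) * zhat))).re) R :=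
      Complex.reCLM.hasFDerivAt.comp_hasDerivAt R (hφD R)
    have h2 : HasDerivAt (fun s : ℝ => (φ s).im) ((zhat • (G.derivative.eval ((R:ℂ) * zhat))).im) R :=
      Complex.imCLM.hasFDerivAt.comp_hasDerivAt R (hφD R)
    have h3 := (h1.mul h1).add (h2.mul h2)
    refine ⟨_, h3.congr_of_eventuallyEq (Filter.Eventually.of_forall fun s => ?_)⟩
    simp [hη_def, Complex.normSq_apply]
  -- ceiling 1
  have hf1 : HasDerivAt (fun s : ℝ => M^2 * (1 + s^2)^n)
      (M^2 * ((n : ℝ) * (1 + R^2)^(n-1) * (2*R))) R := by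
    have h : HasDerivAt (fun s : ℝ => 1 + s^2) (2*R) R := by
      simpa using (hasDerivAt_pow 2 R).const_add 1
    exact (h.pow n).const_mul _
  -- local min of ceiling1 - η at R
  have hEeq : E = M^2 * ((n : ℝ) * (1 + R^2)^(n-1) * (2*R)) := by
    have hρ : HasDerivAt (fun s => M^2 * (1 + s^2)^n - η s)
        (M^2 * ((n : ℝ) * (1 + R^2)^(n-1) * (2*R)) - E) R := hf1.sub hE
    have hmin : IsLocalMin (fun s => M^2 * (1 + s^2)^n - η s) R := by
      apply Filter.Eventually.of_forall
      intro s
      have h1 := hηbound s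
      simp only [hηR]
      linarith
    have h0 := hmin.deriv_eq_zero
    rw [hρ.deriv] at h0
    linarith
  -- max modulus bound on [0, R]
  obtain ⟨H, hH⟩ : ∃ H : Polynomial ℂ, G = X * H := by
    have : (X : Polynomial ℂ) ∣ G := Polynomial.X_dvd_iff.mpr
      (by rw [Polynomial.coeff_zero_eq_eval_zero]; exact hzero)
    exact this
  set C : ℝ := M * Real.sqrt ((1 + R^2)^n) / R with hC_def
  have hGabs : ∀ z : ℂ, ‖G.eval z‖ ≤ M * Real.sqrt ((1 + Complex.normSq z)^n) := by
    intro z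
    have h1 := hbound z
    have h2 : ‖G.eval z‖ = Real.sqrt (Complex.normSq (G.eval z)) := by
      rw [Complex.normSq_eq_norm_sq]; rw [Real.sqrt_sq (norm_nonneg _)]
    rw [h2]
    calc Real.sqrt (Complex.normSq (G.eval z)) ≤ Real.sqrt (M^2 * (1 + Complex.normSq z)^n) :=
          Real.sqrt_le_sqrt h1
      _ = M * Real.sqrt ((1 + Complex.normSq z)^n) := by
          rw [Real.sqrt_mul (by positivity), Real.sqrt_sq hM.le]
  have hHbound : ∀ w ∈ Metric.closedBall (0:ℂ) R, ‖H.eval w‖ ≤ C := by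
    have hfr : ∀ w ∈ frontier (Metric.ball (0:ℂ) R), ‖H.eval w‖ ≤ C := by
      intro w hw
      rw [frontier_ball (0:ℂ) hR.ne'] at hw
      have hwn : ‖w‖ = R := by simpa using hw
      have h3 : ‖G.eval w‖ ≤ M * Real.sqrt ((1 + R^2)^n) := by
        have := hGabs w
        rwa [show Complex.normSq w = R^2 by rw [← Complex.sq_norm]; rw [show ‖w‖ = R from hwn]] at this
      have h4 : ‖G.eval w‖ = R * ‖H.eval w‖ := by
        rw [hH]; simp only [Polynomial.eval_mul, Polynomial.eval_X]
        rw [norm_mul]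
        rw [show ‖w‖ = R from hwn]
      rw [h4] at h3
      rw [hC_def]
      rw [le_div_iff₀ hR]
      linarith
    intro w hw
    rw [← closure_ball (0:ℂ) hR.ne'] at hw
    exact Complex.norm_le_of_forall_mem_frontier_norm_le Metric.isBounded_ball
      ((H.differentiable).diffContOnCl) hfr hw
  have hη2 : ∀ s ∈ Set.Icc (0:ℝ) R, R^2 * η s ≤ M^2 * (1 + R^2)^n * s^2 := by
    intro s hs
    have hw : ((s:ℂ) * zhat) ∈ Metric.closedBall (0:ℂ) R := by
      rw [Metric.mem_closedBall, dist_zero_right]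
      have : ‖(s:ℂ) * zhat‖ = s := by
        rw [norm_mul]
        have h5 : ‖zhat‖ = 1 := by
          have := hzhatsq
          rw [← Complex.sq_norm] at this
          nlinarith [norm_nonneg zhat]
        rw [h5, Complex.norm_real, Real.norm_eq_abs, _root_.abs_of_nonneg hs.1, mul_one]
      rw [this]; exact hs.2
    have h6 := hHbound _ hw
    have h7 : η s = s^2 * Complex.normSq (H.eval ((s:ℂ)*zhat)) := by
      rw [hη_def]
      simp only [hφ_def]
      rw [hH]
      simp only [Polynomial.eval_mul, Polynomial.eval_X]
      rw [Complex.normSq_mul, hnsq s]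
    have h8 : Complex.normSq (H.eval ((s:ℂ)*zhat)) ≤ C^2 := by
      rw [Complex.normSq_eq_norm_sq]
      have := h6
      have hC0 : 0 ≤ C := by
        rw [hC_def]; positivity
      nlinarith [norm_nonneg (H.eval ((s:ℂ)*zhat))]
    have hC2 : R^2 * C^2 = M^2 * (1 + R^2)^n := by
      rw [hC_def]
      rw [div_pow, mul_pow]
      rw [Real.sq_sqrt (by positivity)]
      field_simp
    calc R^2 * η s = R^2 * (s^2 * Complex.normSq (H.eval ((s:ℂ)*zhat))) := by rw [h7]
      _ ≤ R^2 * (s^2 * C^2) := by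
          apply mul_le_mul_of_nonneg_left _ (by positivity)
          exact mul_le_mul_of_nonneg_left h8 (by positivity)
      _ = (R^2 * C^2) * s^2 := by ring
      _ = M^2 * (1 + R^2)^n * s^2 := by rw [hC2]
  -- slope argument
  have hd2 : M^2 * (1 + R^2)^n * (2*R) - R^2 * E ≤ 0 := by
    have hh2 : HasDerivAt (fun s : ℝ => M^2 * (1 + R^2)^n * s^2 - R^2 * η s)
        (M^2 * (1 + R^2)^n * (2*R) - R^2 * E) R := by
      have ha : HasDerivAt (fun s : ℝ => M^2 * (1 + R^2)^n * s^2) (M^2 * (1 + R^2)^n * (2*R)) R := by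
        have := (hasDerivAt_pow 2 R).const_mul (M^2 * (1 + R^2)^n)
        simpa [pow_one, mul_assoc] using this
      exact ha.sub (hE.const_mul _)
    have ht := hasDerivAt_iff_tendsto_slope.mp hh2
    have hsub : Set.Iio R ⊆ {R}ᶜ := fun y hy => ne_of_lt hy
    have ht' := ht.mono_left (nhdsWithin_mono R hsub)
    refine le_of_tendsto ht' ?_
    filter_upwards [Ioo_mem_nhdsLT_of_mem (⟨hR, le_refl R⟩ : R ∈ Set.Ioc 0 R)] with y hy
    have hy1 : (0:ℝ) ≤ y := hy.1.le
    have hy2 : y < R := hy.2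
    have hnum : 0 ≤ M^2 * (1 + R^2)^n * y^2 - R^2 * η y := by
      have := hη2 y ⟨hy1, hy2.le⟩
      linarith
    have hden : y - R < 0 := by linarith
    rw [slope_def_field]
    have hval : M^2 * (1 + R^2)^n * R^2 - R^2 * η R = 0 := by
      rw [hηR]; ring
    rw [hval]
    rw [sub_zero]
    exact div_nonpos_of_nonneg_of_nonpos hnum hden.le
  -- conclude
  obtain ⟨m, hm⟩ : ∃ m, n = m + 1 := ⟨n - 1, by omega⟩
  have hnm : n - 1 = m := by omega
  rw [hEeq] at hd2
  rw [hnm] at hd2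
  rw [hm] at hd2 ⊢
  set c : ℝ := (1 + R^2)^m with hc_def
  have hcpos : 0 < c := by positivity
  have hexp : (1 + R^2)^(m+1) = c * (1 + R^2) := by rw [pow_succ]
  rw [hexp] at hd2
  have hkey : (1 + R^2) * (2 * R * (M^2 * c)) ≤ ((m+1 : ℕ) * R^2) * (2 * R * (M^2 * c)) := by
    push_cast
    push_cast at hd2
    nlinarith [hd2]
  have hpos : 0 < 2 * R * (M^2 * c) := by positivity
  have := le_of_mul_le_mul_right hkey hpos
  exact_mod_cast this

set_option maxHeartbeats 1000000 in
/-- If a nonzero homogeneous polynomial `P ∈ ℂ[z₁, …, z_d]` of degree `n ≥ 1`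
attains its maximal absolute value on the unit sphere `S^{2d-1} ⊂ ℂ^d` at `p`, then every zero
`q` of `P` on the sphere satisfies `arccos |⟨p,q⟩| ≥ arcsin (1/√n)`. -/
theorem complex_sphere_polynomial_zero_avoidance
    (d n : ℕ) (hn : 1 ≤ n) (P : MvPolynomial (Fin d) ℂ)
    (hhom : P.IsHomogeneous n) (hP : P ≠ 0)
    (p : EuclideanSpace ℂ (Fin d)) (hp : ‖p‖ = 1)
    (hmax : ∀ x : EuclideanSpace ℂ (Fin d), ‖x‖ = 1 →
      ‖MvPolynomial.eval (fun i => x i) P‖ ≤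
        ‖MvPolynomial.eval (fun i => p i) P‖) :
    ∀ q : EuclideanSpace ℂ (Fin d), ‖q‖ = 1 → MvPolynomial.eval (fun i => q i) P = 0 →
      Real.arccos ‖(inner ℂ p q : ℂ)‖ ≥ Real.arcsin (1 / Real.sqrt n) := by
  intro q hq hq0
  set M : ℝ := ‖MvPolynomial.eval (fun i => p i) P‖ with hM_def
  -- M > 0
  have hM : 0 < M := by
    obtain ⟨x, hx⟩ : ∃ x : Fin d → ℂ, MvPolynomial.eval x P ≠ 0 := by
      by_contra h
      push_neg at h
      exact hP (MvPolynomial.funext fun x => by rw [h x, map_zero])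
    set x' : EuclideanSpace ℂ (Fin d) := (WithLp.equiv 2 (Fin d → ℂ)).symm x with hx'_def
    have hx'app : ∀ i, x' i = x i := fun i => rfl
    have hxnorm : 0 < ‖x'‖ := by
      rcases eq_or_lt_of_le (norm_nonneg x') with h0 | h0
      · exfalso
        have : x' = 0 := by rwa [eq_comm, norm_eq_zero] at h0
        apply hx
        have : x = 0 := by
          funext i
          rw [← hx'app i, this]
          try rfl
        rw [this]
        rw [show (0 : Fin d → ℂ) = fun _ => (0:ℂ) from rfl]
        rw [MvPolynomial.eval_zero']
        rw [MvPolynomial.constantCoeff_eq]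
        apply hhom.coeff_eq_zero
        rw [map_zero]
        omega
      · exact h0
    set cx : ℂ := (‖x'‖ : ℂ) with hcx_def
    have hcx0 : cx ≠ 0 := by
      simp only [hcx_def, ne_eq, Complex.ofReal_eq_zero]
      exact hxnorm.ne'
    set y : EuclideanSpace ℂ (Fin d) := cx⁻¹ • x' with hy_def
    have hynorm : ‖y‖ = 1 := by
      rw [hy_def, norm_smul, norm_inv, hcx_def, Complex.norm_real, Real.norm_eq_abs,
        abs_of_pos hxnorm, inv_mul_cancel₀ hxnorm.ne']
    have hxy : ∀ i, x i = cx * y i := by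
      intro i
      rw [hy_def]
      have : (cx⁻¹ • x') i = cx⁻¹ * x' i := rfl
      rw [this, ← mul_assoc, mul_inv_cancel₀ hcx0, one_mul, hx'app]
    have heval : MvPolynomial.eval x P = cx ^ n * MvPolynomial.eval (fun i => y i) P := by
      rw [show x = fun i => cx * y i from funext hxy]
      exact homog_eval_smul hhom cx (fun i => y i)
    have hy0 : MvPolynomial.eval (fun i => y i) P ≠ 0 := by
      intro h0
      apply hx
      rw [heval, h0, mul_zero]
    calc (0:ℝ) < ‖MvPolynomial.eval (fun i => y i) P‖ := by
          exact norm_pos_iff.mpr hy0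
      _ ≤ M := hmax y hynorm
  -- inner products
  set α : ℂ := (inner ℂ q p : ℂ) with hα_def
  have habs : ‖(inner ℂ p q : ℂ)‖ = ‖α‖ := by
    rw [hα_def, ← inner_conj_symm p q]
    exact Complex.norm_conj _
  rw [habs]
  by_cases hα0 : α = 0
  · rw [hα0, norm_zero, Real.arccos_zero]
    exact Real.arcsin_le_pi_div_two _
  set a : ℝ := ‖α‖ with ha_def
  have ha : 0 < a := norm_pos_iff.mpr hα0
  set v : EuclideanSpace ℂ (Fin d) := p - α • q with hv_def
  by_cases hv0 : v = 0
  · exfalso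
    have hpq : p = α • q := by
      have := sub_eq_zero.mp (hv_def ▸ hv0)
      exact this
    have : MvPolynomial.eval (fun i => p i) P = α ^ n * MvPolynomial.eval (fun i => q i) P := by
      have hco : (fun i => p i) = fun i => α * q i := by
        funext i
        rw [hpq]
        rfl
      rw [hco]
      exact homog_eval_smul hhom α _
    rw [hq0, mul_zero] at this
    rw [hM_def, this, norm_zero] at hM
    exact lt_irrefl _ hM
  set b : ℝ := ‖v‖ with hb_def
  have hb : 0 < b := by
    rw [hb_def]
    exact norm_pos_iff.mpr hv0
  -- b^2 = 1 - a^2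
  have hinner_pq : (inner ℂ p q : ℂ) = (starRingEnd ℂ) α := by
    rw [hα_def, inner_conj_symm]
  have hb2 : b^2 = 1 - a^2 := by
    have h1 : ‖p - α • q‖^2 = ‖p‖^2 - 2 * Complex.re (inner ℂ p (α • q) : ℂ) + ‖α • q‖^2 :=
      norm_sub_sq (𝕜 := ℂ) p (α • q)
    have h2 : (inner ℂ p (α • q) : ℂ) = α * (starRingEnd ℂ) α := by
      rw [inner_smul_right, hinner_pq]
    have h3 : α * (starRingEnd ℂ) α = (Complex.normSq α : ℂ) := Complex.mul_conj α
    have h4 : Complex.re (inner ℂ p (α • q) : ℂ) = a^2 := by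
      rw [h2, h3, Complex.ofReal_re, Complex.normSq_eq_norm_sq, ha_def]
    have h5 : ‖α • q‖ = a := by
      rw [norm_smul, hq, mul_one, ha_def]
    rw [hb_def, hv_def, h1, h4, h5, hp]
    ring
  have ha1 : a < 1 := by
    nlinarith [hb2, sq_nonneg b, hb]
  -- orthonormal direction u
  set u : EuclideanSpace ℂ (Fin d) := ((b:ℂ))⁻¹ • v with hu_def
  have hbC : ((b:ℂ)) ≠ 0 := by
    simp only [ne_eq, Complex.ofReal_eq_zero]
    exact hb.ne'
  have hu_norm : ‖u‖ = 1 := by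
    rw [hu_def, norm_smul, norm_inv, Complex.norm_real, Real.norm_eq_abs, abs_of_pos hb,
      hb_def, inv_mul_cancel₀ (hb_def ▸ hb.ne')]
  have hqq : (inner ℂ q q : ℂ) = 1 := by
    rw [inner_self_eq_norm_sq_to_K, hq]
    norm_num
  have hqv : (inner ℂ q v : ℂ) = 0 := by
    rw [hv_def, inner_sub_right, inner_smul_right, hqq, mul_one, hα_def, sub_self]
  have hqu : (inner ℂ q u : ℂ) = 0 := by
    rw [hu_def, inner_smul_right, hqv, mul_zero]
  have hvbu : v = (b:ℂ) • u := by
    rw [hu_def, smul_inv_smul₀ hbC]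
  have hp_eq : p = α • q + (b:ℂ) • u := by
    rw [← hvbu, hv_def]
    abel
  clear_value u v
  -- the one-variable polynomial
  set G : Polynomial ℂ :=
    MvPolynomial.aeval (fun i => Polynomial.C (q i) + Polynomial.C (u i) * Polynomial.X) P
    with hG_def
  have hGeval : ∀ z : ℂ, Polynomial.eval z G =
      MvPolynomial.eval (fun i => (q + z • u) i) P := by
    intro z
    have hfun : (fun i => Polynomial.eval z
        (Polynomial.C (q i) + Polynomial.C (u i) * Polynomial.X)) = fun i => (q + z • u) i := by
      funext i
      have h1 : (q + z • u) i = q i + z * u i := rfl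
      rw [Polynomial.eval_add, Polynomial.eval_mul, Polynomial.eval_C, Polynomial.eval_C,
        Polynomial.eval_X, h1, mul_comm (u i) z]
    rw [hG_def, eval_aeval_poly_s9, hfun]
  have hnorm_line : ∀ z : ℂ, ‖q + z • u‖^2 = 1 + Complex.normSq z := by
    intro z
    have h1 : ‖q + z • u‖^2 = ‖q‖^2 + 2 * Complex.re (inner ℂ q (z • u) : ℂ) + ‖z • u‖^2 :=
      norm_add_sq (𝕜 := ℂ) q (z • u)
    have h2 : (inner ℂ q (z • u) : ℂ) = 0 := by rw [inner_smul_right, hqu, mul_zero]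
    rw [h1, h2, hq, norm_smul, hu_norm, mul_one, Complex.zero_re,
      Complex.sq_norm]
    ring
  have hGzero : Polynomial.eval 0 G = 0 := by
    rw [hGeval 0]
    have : q + (0:ℂ) • u = q := by simp
    rw [this, hq0]
  -- global bound
  have hGbound : ∀ z : ℂ, Complex.normSq (Polynomial.eval z G) ≤
      M^2 * (1 + Complex.normSq z)^n := by
    intro z
    set w : EuclideanSpace ℂ (Fin d) := q + z • u with hw_def
    have hwsq : ‖w‖^2 = 1 + Complex.normSq z := hnorm_line z
    have hwpos : 0 < ‖w‖ := by
      nlinarith [Complex.normSq_nonneg z, norm_nonneg w]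
    set cw : ℂ := (‖w‖ : ℂ) with hcw_def
    have hcw0 : cw ≠ 0 := by
      simp only [hcw_def, ne_eq, Complex.ofReal_eq_zero]
      exact hwpos.ne'
    set y : EuclideanSpace ℂ (Fin d) := cw⁻¹ • w with hy_def
    have hynorm : ‖y‖ = 1 := by
      rw [hy_def, norm_smul, norm_inv, hcw_def, Complex.norm_real, Real.norm_eq_abs,
        abs_of_pos hwpos, inv_mul_cancel₀ hwpos.ne']
    have hwy : ∀ i, w i = cw * y i := by
      intro i
      rw [hy_def]
      have : (cw⁻¹ • w) i = cw⁻¹ * w i := rfl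
      rw [this, ← mul_assoc, mul_inv_cancel₀ hcw0, one_mul]
    have heval : MvPolynomial.eval (fun i => w i) P
        = cw ^ n * MvPolynomial.eval (fun i => y i) P := by
      rw [show (fun i => w i) = fun i => cw * y i from funext hwy]
      exact homog_eval_smul hhom cw _
    have habs2 : ‖Polynomial.eval z G‖ ≤ ‖w‖^n * M := by
      rw [hGeval z, ← hw_def, heval, norm_mul, norm_pow]
      have h6 : ‖cw‖ = ‖w‖ := by
        rw [hcw_def, Complex.norm_real, Real.norm_eq_abs, abs_of_pos hwpos]
      rw [h6]
      exact mul_le_mul_of_nonneg_left (hmax y hynorm) (by positivity)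
    have h7 : Complex.normSq (Polynomial.eval z G) ≤ (‖w‖^n * M)^2 := by
      rw [Complex.normSq_eq_norm_sq]
      exact pow_le_pow_left₀ (norm_nonneg _) habs2 2
    calc Complex.normSq (Polynomial.eval z G) ≤ (‖w‖^n * M)^2 := h7
      _ = M^2 * (‖w‖^2)^n := by ring
      _ = M^2 * (1 + Complex.normSq z)^n := by rw [hwsq]
  -- equality point
  set zp : ℂ := (b:ℂ) / α with hzp_def
  set R : ℝ := b / a with hR_def
  have hRpos : 0 < R := div_pos hb ha
  have hzp_abs : ‖zp‖ = R := by
    rw [hzp_def, norm_div, Complex.norm_real, Real.norm_eq_abs, abs_of_pos hb, hR_def, ha_def]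
  have hline_p : q + zp • u = α⁻¹ • p := by
    rw [hp_eq, smul_add, smul_smul, smul_smul, inv_mul_cancel₀ hα0, one_smul, hzp_def,
      div_eq_mul_inv, mul_comm]
  have hRsq : 1 + R^2 = (a^2)⁻¹ := by
    rw [hR_def, div_pow, hb2]
    field_simp
    ring
  have hGzp : Complex.normSq (Polynomial.eval zp G) = M^2 * (1 + R^2)^n := by
    have h1 : Polynomial.eval zp G = α⁻¹ ^ n * MvPolynomial.eval (fun i => p i) P := by
      rw [hGeval zp, hline_p]
      have hco : (fun i => (α⁻¹ • p) i) = fun i => α⁻¹ * p i := funext fun i => rfl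
      rw [hco]
      exact homog_eval_smul hhom α⁻¹ _
    have h2 : Complex.normSq α = a^2 := by rw [Complex.normSq_eq_norm_sq, ha_def]
    have h3 : Complex.normSq (MvPolynomial.eval (fun i => p i) P) = M^2 := by
      rw [Complex.normSq_eq_norm_sq, ← hM_def]
    rw [h1, Complex.normSq_mul, map_pow, Complex.normSq_inv, h2, h3, hRsq, inv_pow]
    ring
  -- apply the core lemma
  have hkey : 1 + R^2 ≤ n * R^2 :=
    zero_avoid_core n hn G M R hM hRpos zp hzp_abs hGbound hGzp hGzero
  have hnR : (0:ℝ) < n := by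
    have : (1:ℝ) ≤ n := by exact_mod_cast hn
    linarith
  have ha2 : a^2 ≤ 1 - 1/(n:ℝ) := by
    have hr2 : R^2 = (1-a^2)/a^2 := by
      rw [hR_def, div_pow, hb2]
    have ha2pos : 0 < a^2 := by positivity
    have hk2 : (a^2)⁻¹ ≤ (n:ℝ) * ((1-a^2)/a^2) := by
      calc (a^2)⁻¹ = 1 + R^2 := hRsq.symm
        _ ≤ (n:ℝ) * R^2 := hkey
        _ = (n:ℝ) * ((1-a^2)/a^2) := by rw [hr2]
    have h6 : 1 ≤ (n:ℝ) * (1 - a^2) := by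
      calc (1:ℝ) = (a^2)⁻¹ * a^2 := (inv_mul_cancel₀ ha2pos.ne').symm
        _ ≤ ((n:ℝ) * ((1-a^2)/a^2)) * a^2 := mul_le_mul_of_nonneg_right hk2 ha2pos.le
        _ = (n:ℝ) * (1-a^2) := by field_simp
    have h8 : 1/(n:ℝ) ≤ 1 - a^2 := by
      rw [div_le_iff₀ hnR]
      nlinarith [h6]
    linarith
  -- final trigonometry
  set t : ℝ := 1 / Real.sqrt n with ht_def
  have hsn : (1:ℝ) ≤ Real.sqrt n := by
    rw [show (1:ℝ) = Real.sqrt 1 from (Real.sqrt_one).symm]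
    apply Real.sqrt_le_sqrt
    exact_mod_cast hn
  have ht0 : 0 ≤ t := by rw [ht_def]; positivity
  have htsq : t^2 = 1/(n:ℝ) := by
    rw [ht_def, div_pow, one_pow, Real.sq_sqrt hnR.le]
  have hstep : a ≤ Real.sqrt (1 - t^2) := by
    rw [htsq]
    calc a = Real.sqrt (a^2) := (Real.sqrt_sq ha.le).symm
      _ ≤ Real.sqrt (1 - 1/(n:ℝ)) := Real.sqrt_le_sqrt ha2
  have harc1 : Real.arcsin a ≤ Real.arccos t := by
    have h2 : Real.arcsin a ≤ Real.arcsin (Real.sqrt (1 - t^2)) :=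
      Real.monotone_arcsin hstep
    rw [← Real.sin_arccos] at h2
    rwa [Real.arcsin_sin
      (by
        have := Real.arccos_nonneg t
        have := Real.pi_pos
        linarith)
      (by
        rw [Real.arccos_eq_pi_div_two_sub_arcsin]
        have := Real.arcsin_nonneg.mpr ht0
        linarith)] at h2
  rw [ge_iff_le, Real.arccos_eq_pi_div_two_sub_arcsin]
  rw [Real.arccos_eq_pi_div_two_sub_arcsin] at harc1
  linarith
end
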